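/- arXiv:1102.0366 — 3 statements merged into one kernel-verified Lean document; each statement's English description precedes it below -/
import Mathlib

section
/- Let B = P ⊗_k A where P is a commutative k-algebra that is an integral domain and A = k⟨y_1,…,y_n⟩ is the free associative algebra, so B is the free associative algebra over P. If f, g ∈ B are nonzero homogeneous elements (in total degree in the y_i) that are left dependent over B (i.e., there exist u, v ∈ B, not both zero, with u f + v g = 0) and f, g both lie in P ⊗_k L where L is the free Lie algebra on y_1,…,y_n, then deg f = deg g. -/
attribute [local instance] LieRing.ofAssociativeRing

open Finset FreeMonoid

namespace Stmt16Aux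

variable {P : Type*} [CommRing P] {σ : Type*}



lemma mul_apply_eq_sum {M : Type*} [Monoid M] {ι : Type*} (s : Finset ι) (p q : ι → M) (w : M)
    (h1 : ∀ i ∈ s, p i * q i = w)
    (h2 : ∀ a b : M, a * b = w → ∃ i ∈ s, p i = a ∧ q i = b)
    (h3 : ∀ i ∈ s, ∀ j ∈ s, p i = p j → q i = q j → i = j)
    (x y : MonoidAlgebra P M) :
    (x * y).coeff w = ∑ i ∈ s, x.coeff (p i) * y.coeff (q i) := by
  classical
  induction x using MonoidAlgebra.induction_linear with
  | zero => simp
  | add f g hf hg =>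
      rw [add_mul, MonoidAlgebra.coeff_add, Finsupp.add_apply, hf, hg, ← Finset.sum_add_distrib]
      exact Finset.sum_congr rfl fun i _ => by rw [MonoidAlgebra.coeff_add, Finsupp.add_apply, add_mul]
  | single a c =>
    induction y using MonoidAlgebra.induction_linear with
    | zero => simp
    | add f g hf hg =>
        rw [mul_add, MonoidAlgebra.coeff_add, Finsupp.add_apply, hf, hg, ← Finset.sum_add_distrib]
        exact Finset.sum_congr rfl fun i _ => by rw [MonoidAlgebra.coeff_add, Finsupp.add_apply, mul_add]
    | single b d =>
        simp only [MonoidAlgebra.single_mul_single, MonoidAlgebra.coeff_single]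
        rw [Finsupp.single_apply]
        by_cases hab : a * b = w
        · obtain ⟨i₀, hi₀s, hpa, hqb⟩ := h2 a b hab
          rw [if_pos hab, Finset.sum_eq_single i₀]
          · rw [hpa, hqb, Finsupp.single_apply, Finsupp.single_apply, if_pos rfl, if_pos rfl]
          · intro j hj hne
            by_cases hpj : p j = a
            · by_cases hqj : q j = b
              · exact absurd (h3 j hj i₀ hi₀s (by rw [hpj, hpa]) (by rw [hqj, hqb])) hne
              · rw [Finsupp.single_apply (a := b), if_neg fun h => hqj h.symm, mul_zero]
            · rw [Finsupp.single_apply (a := a), if_neg fun h => hpj h.symm, zero_mul]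
          · intro h; exact absurd hi₀s h
        · rw [if_neg hab]
          refine (Finset.sum_eq_zero ?_).symm
          intro j hj
          by_cases hpj : p j = a
          · by_cases hqj : q j = b
            · exact absurd (by rw [← hpj, ← hqj, h1 j hj]) hab
            · rw [Finsupp.single_apply (a := b), if_neg fun h => hqj h.symm, mul_zero]
          · rw [Finsupp.single_apply (a := a), if_neg fun h => hpj h.symm, zero_mul]

lemma coeff_mul (x y : MonoidAlgebra P (FreeMonoid σ)) (w : FreeMonoid σ) :
    (x * y).coeff w = ∑ i ∈ Finset.range ((toList w).length + 1),
      x.coeff (ofList ((toList w).take i)) * y.coeff (ofList ((toList w).drop i)) := by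
  refine mul_apply_eq_sum _ _ _ _ ?_ ?_ ?_ x y
  · intro i _
    apply toList.injective
    simp [FreeMonoid.toList_mul]
  · intro a b hab
    have hw : toList w = toList a ++ toList b := by rw [← hab, FreeMonoid.toList_mul]
    refine ⟨(toList a).length, ?_, ?_, ?_⟩
    · rw [Finset.mem_range, hw]; simp
    · rw [hw, List.take_left]; exact FreeMonoid.ofList_toList a
    · rw [hw, List.drop_left]; exact FreeMonoid.ofList_toList b
  · intro i hi j hj hp _
    rw [Finset.mem_range] at hi hj
    have h2 := congrArg (fun z => (toList z).length) hp
    simp only [FreeMonoid.toList_ofList, List.length_take] at h2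
    omega

lemma coeff_mul₂ (x y : MonoidAlgebra P (FreeMonoid σ × FreeMonoid σ)) (w t : FreeMonoid σ) :
    (x * y).coeff (w, t) = ∑ i ∈ Finset.range ((toList w).length + 1),
      ∑ j ∈ Finset.range ((toList t).length + 1),
      x.coeff (ofList ((toList w).take i), ofList ((toList t).take j)) *
      y.coeff (ofList ((toList w).drop i), ofList ((toList t).drop j)) := by
  rw [← Finset.sum_product']
  refine mul_apply_eq_sum _ _ _ _ ?_ ?_ ?_ x y
  · rintro ⟨i, j⟩ _
    refine Prod.ext ?_ ?_ <;> · apply toList.injective; simp [FreeMonoid.toList_mul]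
  · rintro ⟨a₁, a₂⟩ ⟨b₁, b₂⟩ hab
    rw [Prod.mk_mul_mk, Prod.mk.injEq] at hab
    obtain ⟨hab1, hab2⟩ := hab
    have hw : toList w = toList a₁ ++ toList b₁ := by rw [← hab1, FreeMonoid.toList_mul]
    have ht : toList t = toList a₂ ++ toList b₂ := by rw [← hab2, FreeMonoid.toList_mul]
    refine ⟨((toList a₁).length, (toList a₂).length), ?_, ?_, ?_⟩
    · rw [Finset.mem_product, Finset.mem_range, Finset.mem_range, hw, ht]
      constructor <;> · simp
    · refine Prod.ext ?_ ?_
      · rw [hw]; simp only [List.take_left]; exact FreeMonoid.ofList_toList a₁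
      · rw [ht]; simp only [List.take_left]; exact FreeMonoid.ofList_toList a₂
    · refine Prod.ext ?_ ?_
      · rw [hw]; simp only [List.drop_left]; exact FreeMonoid.ofList_toList b₁
      · rw [ht]; simp only [List.drop_left]; exact FreeMonoid.ofList_toList b₂
  · rintro ⟨i₁, i₂⟩ hi ⟨j₁, j₂⟩ hj hp _
    rw [Finset.mem_product, Finset.mem_range, Finset.mem_range] at hi hj
    rw [Prod.ext_iff] at hp
    obtain ⟨hp1, hp2⟩ := hp
    have e1 := congrArg (fun z => (toList z).length) hp1
    have e2 := congrArg (fun z => (toList z).length) hp2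
    simp only [FreeMonoid.toList_ofList, List.length_take] at e1 e2
    refine Prod.ext ?_ ?_ <;> simp <;> omega




-- injections B → B2
noncomputable def i1 (P : Type*) [CommRing P] (σ : Type*) :
    MonoidAlgebra P (FreeMonoid σ) →+* MonoidAlgebra P (FreeMonoid σ × FreeMonoid σ) :=
  MonoidAlgebra.mapDomainRingHom P (MonoidHom.inl (FreeMonoid σ) (FreeMonoid σ))

noncomputable def i2 (P : Type*) [CommRing P] (σ : Type*) :
    MonoidAlgebra P (FreeMonoid σ) →+* MonoidAlgebra P (FreeMonoid σ × FreeMonoid σ) :=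
  MonoidAlgebra.mapDomainRingHom P (MonoidHom.inr (FreeMonoid σ) (FreeMonoid σ))

lemma i1_single (w : FreeMonoid σ) (c : P) :
    i1 P σ (MonoidAlgebra.single w c) = MonoidAlgebra.single (w, 1) c := by
  show MonoidAlgebra.mapDomain _ _ = _
  rw [MonoidAlgebra.mapDomain_single]; rfl

lemma i2_single (w : FreeMonoid σ) (c : P) :
    i2 P σ (MonoidAlgebra.single w c) = MonoidAlgebra.single (1, w) c := by
  show MonoidAlgebra.mapDomain _ _ = _
  rw [MonoidAlgebra.mapDomain_single]; rfl

lemma i1_smul (c : P) (x : MonoidAlgebra P (FreeMonoid σ)) :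
    i1 P σ (c • x) = c • i1 P σ x := MonoidAlgebra.mapDomain_smul _ c x

lemma i2_smul (c : P) (x : MonoidAlgebra P (FreeMonoid σ)) :
    i2 P σ (c • x) = c • i2 P σ x := MonoidAlgebra.mapDomain_smul _ c x

lemma i1_apply_one (x : MonoidAlgebra P (FreeMonoid σ)) (p : FreeMonoid σ) :
    (i1 P σ x).coeff (p, 1) = x.coeff p :=
  Finsupp.mapDomain_apply (fun a b hab => by simpa [Prod.ext_iff] using hab) x.coeff p

lemma i1_apply_ne (x : MonoidAlgebra P (FreeMonoid σ)) (p q : FreeMonoid σ) (hq : q ≠ 1) :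
    (i1 P σ x).coeff (p, q) = 0 := by
  refine Finsupp.mapDomain_notin_range x.coeff _ ?_
  rintro ⟨a, ha⟩
  rw [Prod.ext_iff] at ha
  exact hq ha.2.symm

lemma i2_apply_one (x : MonoidAlgebra P (FreeMonoid σ)) (q : FreeMonoid σ) :
    (i2 P σ x).coeff (1, q) = x.coeff q :=
  Finsupp.mapDomain_apply (fun a b hab => by simpa [Prod.ext_iff] using hab) x.coeff q

lemma i2_apply_ne (x : MonoidAlgebra P (FreeMonoid σ)) (p q : FreeMonoid σ) (hp : p ≠ 1) :
    (i2 P σ x).coeff (p, q) = 0 := by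
  refine Finsupp.mapDomain_notin_range x.coeff _ ?_
  rintro ⟨a, ha⟩
  rw [Prod.ext_iff] at ha
  exact hp ha.1.symm

lemma commute_i1_i2 (x y : MonoidAlgebra P (FreeMonoid σ)) :
    i1 P σ x * i2 P σ y = i2 P σ y * i1 P σ x := by
  induction x using MonoidAlgebra.induction_linear with
  | zero => simp
  | add f g hf hg => simp [map_add, add_mul, mul_add, hf, hg]
  | single a c =>
    induction y using MonoidAlgebra.induction_linear with
    | zero => simp
    | add f g hf hg => simp [map_add, add_mul, mul_add, hf, hg]
    | single b d =>
        rw [i1_single, i2_single, MonoidAlgebra.single_mul_single,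
          MonoidAlgebra.single_mul_single]
        congr 1
        · simp [Prod.ext_iff]
        · exact mul_comm c d

-- the coproduct
noncomputable def Delta (P : Type*) [CommRing P] (σ : Type*) :
    MonoidAlgebra P (FreeMonoid σ) →ₐ[P] MonoidAlgebra P (FreeMonoid σ × FreeMonoid σ) :=
  MonoidAlgebra.lift P _ (FreeMonoid σ)
    (FreeMonoid.lift fun a => i1 P σ (MonoidAlgebra.of P (FreeMonoid σ) (FreeMonoid.of a))
      + i2 P σ (MonoidAlgebra.of P (FreeMonoid σ) (FreeMonoid.of a)))

lemma Delta_of (a : σ) :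
    Delta P σ (MonoidAlgebra.of P (FreeMonoid σ) (FreeMonoid.of a))
      = i1 P σ (MonoidAlgebra.of P (FreeMonoid σ) (FreeMonoid.of a))
      + i2 P σ (MonoidAlgebra.of P (FreeMonoid σ) (FreeMonoid.of a)) := by
  rw [Delta, MonoidAlgebra.lift_of, FreeMonoid.lift_eval_of]

/-- The primitive elements, as a Lie subalgebra. -/
noncomputable def prim (P : Type*) [CommRing P] (σ : Type*) :
    LieSubalgebra P (MonoidAlgebra P (FreeMonoid σ)) where
  carrier := {x | Delta P σ x = i1 P σ x + i2 P σ x}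
  add_mem' := by
    intro a b ha hb
    simp only [Set.mem_setOf_eq] at *
    rw [map_add, ha, hb, map_add, map_add]
    abel
  zero_mem' := by simp
  smul_mem' := by
    intro c x hx
    simp only [Set.mem_setOf_eq] at *
    rw [map_smul, hx, i1_smul, i2_smul, smul_add]
  lie_mem' := by
    intro x y hx hy
    simp only [Set.mem_setOf_eq] at *
    rw [Ring.lie_def]
    simp only [map_sub, map_mul, hx, hy]
    rw [add_mul, mul_add, mul_add, add_mul, mul_add, mul_add,
      commute_i1_i2 x y, ← commute_i1_i2 y x]
    abel

lemma mem_prim (x : MonoidAlgebra P (FreeMonoid σ))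
    (hx : x ∈ LieSubalgebra.lieSpan P (MonoidAlgebra P (FreeMonoid σ))
      (Set.range fun i : σ => MonoidAlgebra.of P (FreeMonoid σ) (FreeMonoid.of i))) :
    Delta P σ x = i1 P σ x + i2 P σ x := by
  have : LieSubalgebra.lieSpan P (MonoidAlgebra P (FreeMonoid σ))
      (Set.range fun i : σ => MonoidAlgebra.of P (FreeMonoid σ) (FreeMonoid.of i)) ≤ prim P σ := by
    rw [LieSubalgebra.lieSpan_le]
    rintro _ ⟨a, rfl⟩
    exact Delta_of a
  exact this hx




lemma fm_mul_eq_one {a b : FreeMonoid σ} : a * b = 1 ↔ a = 1 ∧ b = 1 := by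
  constructor
  · intro h
    have h2 := congrArg FreeMonoid.toList h
    rw [FreeMonoid.toList_mul, FreeMonoid.toList_one, List.append_eq_nil_iff] at h2
    constructor
    · apply toList.injective; rw [FreeMonoid.toList_one, h2.1]
    · apply toList.injective; rw [FreeMonoid.toList_one, h2.2]
  · rintro ⟨rfl, rfl⟩; exact mul_one 1

open scoped Classical in
noncomputable def phi (P : Type*) [CommRing P] (σ : Type*) :
    FreeMonoid σ × FreeMonoid σ →* MonoidAlgebra P (FreeMonoid σ) where
  toFun m := if m.2 = 1 then MonoidAlgebra.single m.1 1 else 0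
  map_one' := by
    simp [MonoidAlgebra.one_def]
  map_mul' := by
    rintro ⟨a1, a2⟩ ⟨b1, b2⟩
    simp only [Prod.mk_mul_mk]
    by_cases h2 : a2 = 1
    · by_cases h3 : b2 = 1
      · subst h2; subst h3
        rw [if_pos (mul_one 1), if_pos rfl, if_pos rfl, MonoidAlgebra.single_mul_single, mul_one]
      · rw [if_neg (fun h => h3 (fm_mul_eq_one.mp h).2), if_neg h3, mul_zero]
    · rw [if_neg (fun h => h2 (fm_mul_eq_one.mp h).1), if_neg h2, zero_mul]


noncomputable def E1 (P : Type*) [CommRing P] (σ : Type*) :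
    MonoidAlgebra P (FreeMonoid σ × FreeMonoid σ) →ₐ[P] MonoidAlgebra P (FreeMonoid σ) :=
  MonoidAlgebra.lift P _ (FreeMonoid σ × FreeMonoid σ) (phi P σ)

lemma phi_apply_one (w : FreeMonoid σ) :
    phi P σ (w, 1) = MonoidAlgebra.single w (1 : P) := by
  simp [phi]

lemma phi_apply_ne (w q : FreeMonoid σ) (hq : q ≠ 1) :
    phi P σ (w, q) = (0 : MonoidAlgebra P (FreeMonoid σ)) := by
  simp [phi, hq]

lemma E1_Delta (x : MonoidAlgebra P (FreeMonoid σ)) : E1 P σ (Delta P σ x) = x := by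
  have key : (E1 P σ).comp (Delta P σ) = AlgHom.id P (MonoidAlgebra P (FreeMonoid σ)) := by
    refine MonoidAlgebra.algHom_ext ?_ (Subsingleton.elim _ _)
    intro w
    induction w using FreeMonoid.recOn with
    | one =>
        show (E1 P σ).comp (Delta P σ) 1 = (1 : MonoidAlgebra P (FreeMonoid σ))
        rw [map_one]
    | of_mul a w ih =>
        have h1 : (MonoidAlgebra.single (FreeMonoid.of a * w) (1 : P))
            = MonoidAlgebra.single (FreeMonoid.of a) 1 * MonoidAlgebra.single w 1 := by
          rw [MonoidAlgebra.single_mul_single, mul_one]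
        rw [h1, map_mul, map_mul, ih]
        congr 1
        show E1 P σ (Delta P σ (MonoidAlgebra.of P (FreeMonoid σ) (FreeMonoid.of a))) = _
        rw [Delta_of, map_add]
        have e1 : E1 P σ (i1 P σ (MonoidAlgebra.of P (FreeMonoid σ) (FreeMonoid.of a)))
            = MonoidAlgebra.single (FreeMonoid.of a) (1 : P) := by
          rw [MonoidAlgebra.of_apply, i1_single]
          show MonoidAlgebra.lift P _ _ (phi P σ) _ = _
          rw [MonoidAlgebra.lift_single, phi_apply_one, one_smul]
        have e2 : E1 P σ (i2 P σ (MonoidAlgebra.of P (FreeMonoid σ) (FreeMonoid.of a)))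
            = 0 := by
          rw [MonoidAlgebra.of_apply, i2_single]
          show MonoidAlgebra.lift P _ _ (phi P σ) _ = _
          rw [MonoidAlgebra.lift_single, phi_apply_ne, smul_zero]
          intro h
          have := congrArg FreeMonoid.toList h
          simp [FreeMonoid.toList_of, FreeMonoid.toList_one] at this
        rw [e1, e2, add_zero]; rfl
  calc E1 P σ (Delta P σ x) = ((E1 P σ).comp (Delta P σ)) x := rfl
    _ = x := by rw [key]; rfl

lemma E1_apply (z : MonoidAlgebra P (FreeMonoid σ × FreeMonoid σ)) (p : FreeMonoid σ) :
    (E1 P σ z).coeff p = z.coeff (p, 1) := by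
  classical
  rw [E1, MonoidAlgebra.lift_apply, MonoidAlgebra.coeff_finsuppSum, Finsupp.sum_apply]
  rw [Finsupp.sum]
  rw [Finset.sum_eq_single ((p, 1) : FreeMonoid σ × FreeMonoid σ)]
  · rw [phi_apply_one, MonoidAlgebra.coeff_smul, MonoidAlgebra.coeff_single, Finsupp.smul_apply, Finsupp.single_eq_same, smul_eq_mul, mul_one]
  · rintro ⟨m1, m2⟩ _ hne
    by_cases h2 : m2 = 1
    · subst h2
      have hm1 : m1 ≠ p := fun h => hne (by rw [h])
      rw [phi_apply_one, MonoidAlgebra.coeff_smul, MonoidAlgebra.coeff_single, Finsupp.smul_apply, Finsupp.single_apply, if_neg hm1, smul_zero]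
    · rw [phi_apply_ne _ _ h2, smul_zero, MonoidAlgebra.coeff_zero, Finsupp.coe_zero, Pi.zero_apply]
  · intro hns
    rw [Finsupp.notMem_support_iff.mp hns, zero_smul, MonoidAlgebra.coeff_zero, Finsupp.coe_zero, Pi.zero_apply]

lemma Delta_apply_one (x : MonoidAlgebra P (FreeMonoid σ)) (p : FreeMonoid σ) :
    (Delta P σ x).coeff (p, 1) = x.coeff p := by
  rw [← E1_apply, E1_Delta]

lemma hom_mul {x y : MonoidAlgebra P (FreeMonoid σ)} {d1 d2 : ℕ}
    (hx : ∀ w ∈ x.coeff.support, (FreeMonoid.toList w).length = d1)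
    (hy : ∀ w ∈ y.coeff.support, (FreeMonoid.toList w).length = d2) :
    ∀ w ∈ (x * y).coeff.support, (FreeMonoid.toList w).length = d1 + d2 := by
  classical
  intro w hw
  have h := MonoidAlgebra.support_coeff_mul_subset x y hw
  rw [Finset.mem_mul] at h
  obtain ⟨a, ha, b, hb, rfl⟩ := h
  rw [FreeMonoid.toList_mul, List.length_append, hx a ha, hy b hb]

lemma hom_pow {f : MonoidAlgebra P (FreeMonoid σ)} {df : ℕ}
    (hf : ∀ w ∈ f.coeff.support, (FreeMonoid.toList w).length = df) :
    ∀ i : ℕ, ∀ w ∈ (f ^ i).coeff.support, (FreeMonoid.toList w).length = i * df := by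
  intro i
  induction i with
  | zero =>
      intro w hw
      rw [pow_zero] at hw
      have : w = 1 := by
        have := Finsupp.support_single_subset (a := (1 : FreeMonoid σ)) (b := (1 : P)) hw
        simpa using this
      subst this
      simp [FreeMonoid.toList_one]
  | succ i ih =>
      intro w hw
      rw [pow_succ] at hw
      have := hom_mul ih hf w hw
      rw [this]; ring

lemma hom2_mul {x y : MonoidAlgebra P (FreeMonoid σ × FreeMonoid σ)} {d1 d2 : ℕ}
    (hx : ∀ m ∈ x.coeff.support, (FreeMonoid.toList m.1).length + (FreeMonoid.toList m.2).length = d1)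
    (hy : ∀ m ∈ y.coeff.support, (FreeMonoid.toList m.1).length + (FreeMonoid.toList m.2).length = d2) :
    ∀ m ∈ (x * y).coeff.support,
      (FreeMonoid.toList m.1).length + (FreeMonoid.toList m.2).length = d1 + d2 := by
  classical
  intro m hm
  have h := MonoidAlgebra.support_coeff_mul_subset x y hm
  rw [Finset.mem_mul] at h
  obtain ⟨a, ha, b, hb, rfl⟩ := h
  have : ((a * b).1, (a * b).2) = (a.1 * b.1, a.2 * b.2) := rfl
  rw [show (a*b).1 = a.1 * b.1 from rfl, show (a*b).2 = a.2 * b.2 from rfl]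
  rw [FreeMonoid.toList_mul, FreeMonoid.toList_mul, List.length_append, List.length_append]
  have := hx a ha
  have := hy b hb
  omega

lemma hom_Delta_single (w : FreeMonoid σ) :
    ∀ m ∈ (Delta P σ (MonoidAlgebra.single w (1 : P))).coeff.support,
      (FreeMonoid.toList m.1).length + (FreeMonoid.toList m.2).length
        = (FreeMonoid.toList w).length := by
  classical
  induction w using FreeMonoid.recOn with
  | one =>
      intro m hm
      rw [show (MonoidAlgebra.single (1 : FreeMonoid σ) (1 : P))
          = (1 : MonoidAlgebra P (FreeMonoid σ)) from rfl, map_one] at hm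
      have : m = 1 := by
        have := Finsupp.support_single_subset
          (a := (1 : FreeMonoid σ × FreeMonoid σ)) (b := (1 : P)) hm
        simpa using this
      subst this
      simp [FreeMonoid.toList_one]
  | of_mul a w ih =>
      intro m hm
      have h1 : (MonoidAlgebra.single (FreeMonoid.of a * w) (1 : P))
          = MonoidAlgebra.single (FreeMonoid.of a) 1 * MonoidAlgebra.single w 1 := by
        rw [MonoidAlgebra.single_mul_single, mul_one]
      rw [h1, map_mul] at hm
      have hfirst : ∀ m' ∈ (Delta P σ (MonoidAlgebra.single (FreeMonoid.of a) (1:P))).coeff.support,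
          (FreeMonoid.toList m'.1).length + (FreeMonoid.toList m'.2).length = 1 := by
        intro m' hm'
        have : Delta P σ (MonoidAlgebra.single (FreeMonoid.of a) (1:P))
            = MonoidAlgebra.single ((FreeMonoid.of a), (1 : FreeMonoid σ)) 1
              + MonoidAlgebra.single ((1 : FreeMonoid σ), (FreeMonoid.of a)) 1 := by
          rw [show (MonoidAlgebra.single (FreeMonoid.of a) (1:P))
              = MonoidAlgebra.of P (FreeMonoid σ) (FreeMonoid.of a) from rfl, Delta_of,
            MonoidAlgebra.of_apply, i1_single, i2_single]
        rw [this] at hm'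
        have h2 := Finsupp.support_add hm'
        rw [Finset.mem_union] at h2
        rcases h2 with h2 | h2
        · have := Finsupp.support_single_subset h2
          simp only [Finset.mem_singleton] at this
          subst this
          simp [FreeMonoid.toList_of, FreeMonoid.toList_one]
        · have := Finsupp.support_single_subset h2
          simp only [Finset.mem_singleton] at this
          subst this
          simp [FreeMonoid.toList_of, FreeMonoid.toList_one]
      have := hom2_mul hfirst ih m hm
      rw [this, FreeMonoid.toList_mul, List.length_append, FreeMonoid.toList_of]
      simp

lemma hom_Delta {x : MonoidAlgebra P (FreeMonoid σ)} {d : ℕ}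
    (hx : ∀ w ∈ x.coeff.support, (FreeMonoid.toList w).length = d) :
    ∀ m ∈ (Delta P σ x).coeff.support,
      (FreeMonoid.toList m.1).length + (FreeMonoid.toList m.2).length = d := by
  classical
  intro m hm
  have hrepr : x = x.coeff.sum (fun w c => MonoidAlgebra.single w c) := (MonoidAlgebra.sum_coeff_single x).symm
  rw [hrepr, map_finsuppSum, MonoidAlgebra.coeff_finsuppSum] at hm
  have h2 := Finsupp.support_sum hm
  rw [Finset.mem_biUnion] at h2
  obtain ⟨w, hws, hmw⟩ := h2
  have hsm : (MonoidAlgebra.single w (x.coeff w) : MonoidAlgebra P (FreeMonoid σ))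
      = (x.coeff w) • MonoidAlgebra.single w (1 : P) := by
    rw [MonoidAlgebra.smul_single, smul_eq_mul, mul_one]
  rw [hsm, map_smul, MonoidAlgebra.coeff_smul] at hmw
  have hmw2 := Finsupp.support_smul hmw
  have := hom_Delta_single w m hmw2
  rw [this]
  exact hx w hws

lemma i1_mul_i2_apply (a b : MonoidAlgebra P (FreeMonoid σ)) (p q : FreeMonoid σ) :
    (i1 P σ a * i2 P σ b).coeff (p, q) = a.coeff p * b.coeff q := by
  induction a using MonoidAlgebra.induction_linear with
  | zero => simp
  | add x y hx hy =>
      rw [map_add, add_mul, MonoidAlgebra.coeff_add, Finsupp.add_apply, hx, hy, MonoidAlgebra.coeff_add, Finsupp.add_apply, add_mul]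
  | single w c =>
    induction b using MonoidAlgebra.induction_linear with
    | zero => simp
    | add x y hx hy =>
        rw [map_add, mul_add, MonoidAlgebra.coeff_add, Finsupp.add_apply, hx, hy, MonoidAlgebra.coeff_add, Finsupp.add_apply, mul_add]
    | single w' d =>
        rw [i1_single, i2_single, MonoidAlgebra.single_mul_single]
        have h1 : ((w, (1 : FreeMonoid σ)) * (1, w')) = (w, w') := by
          simp [Prod.ext_iff]
        rw [h1]
        classical
        simp only [MonoidAlgebra.coeff_single]
        rw [Finsupp.single_apply, Finsupp.single_apply, Finsupp.single_apply]
        by_cases hw : w = p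
        · by_cases hw' : w' = q
          · rw [if_pos (by simp [Prod.ext_iff, hw, hw']), if_pos hw, if_pos hw']
          · rw [if_neg (by simp [Prod.ext_iff, hw']), if_neg hw', mul_zero]
        · rw [if_neg (by simp [Prod.ext_iff]; tauto), if_neg hw, zero_mul]

/-- slice of an element of `B2` along a fixed right component. -/
noncomputable def St (t : FreeMonoid σ) (z : MonoidAlgebra P (FreeMonoid σ × FreeMonoid σ)) :
    MonoidAlgebra P (FreeMonoid σ) :=
  MonoidAlgebra.comapDomain (fun p => (p, t))
    (fun a b hab => by simpa [Prod.ext_iff] using hab) z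

lemma St_apply (t : FreeMonoid σ) (z : MonoidAlgebra P (FreeMonoid σ × FreeMonoid σ))
    (w : FreeMonoid σ) : (St t z).coeff w = z.coeff (w, t) :=
  Finsupp.comapDomain_apply _ _ _ _

lemma St_nsmul (t : FreeMonoid σ) (n : ℕ) (z : MonoidAlgebra P (FreeMonoid σ × FreeMonoid σ)) :
    St t (n • z) = n • St t z := by
  apply MonoidAlgebra.ext; apply Finsupp.ext; intro w
  rw [St_apply, MonoidAlgebra.coeff_smul, Finsupp.smul_apply, MonoidAlgebra.coeff_smul, Finsupp.smul_apply, St_apply]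

lemma St_one_Delta (h : MonoidAlgebra P (FreeMonoid σ)) : St 1 (Delta P σ h) = h := by
  apply MonoidAlgebra.ext; apply Finsupp.ext; intro w
  rw [St_apply, Delta_apply_one]

/-- right multiplication by `i1 a` acts on slices by right multiplication. -/
lemma St_mul_i1 (t : FreeMonoid σ) (z : MonoidAlgebra P (FreeMonoid σ × FreeMonoid σ))
    (a : MonoidAlgebra P (FreeMonoid σ)) :
    St t (z * i1 P σ a) = St t z * a := by
  classical
  apply MonoidAlgebra.ext; apply Finsupp.ext; intro w
  rw [St_apply, coeff_mul₂, coeff_mul (St t z) a w]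
  refine Finset.sum_congr rfl ?_
  intro i _
  rw [Finset.sum_eq_single ((FreeMonoid.toList t).length)]
  · rw [List.take_length, List.drop_length]
    rw [show FreeMonoid.ofList (FreeMonoid.toList t) = t from FreeMonoid.ofList_toList t]
    rw [show (FreeMonoid.ofList ([] : List σ)) = 1 from rfl]
    rw [i1_apply_one, St_apply]
  · intro j hjm hj
    rw [Finset.mem_range] at hjm
    have hne : FreeMonoid.ofList ((FreeMonoid.toList t).drop j) ≠ 1 := by
      intro hcon
      have h5 := congrArg FreeMonoid.toList hcon
      rw [FreeMonoid.toList_ofList, FreeMonoid.toList_one] at h5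
      have h6 := congrArg List.length h5
      rw [List.length_drop, List.length_nil] at h6
      omega
    rw [i1_apply_ne _ _ _ hne, mul_zero]
  · intro hcon
    exact absurd (Finset.mem_range.mpr (by omega)) hcon

/-- right multiplication by `i2 b` acts on slices. -/
lemma St_mul_i2 (t : FreeMonoid σ) (z : MonoidAlgebra P (FreeMonoid σ × FreeMonoid σ))
    (b : MonoidAlgebra P (FreeMonoid σ)) :
    St t (z * i2 P σ b) = ∑ j ∈ Finset.range ((FreeMonoid.toList t).length + 1),
      b.coeff (FreeMonoid.ofList ((FreeMonoid.toList t).drop j)) •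
        St (FreeMonoid.ofList ((FreeMonoid.toList t).take j)) z := by
  classical
  apply MonoidAlgebra.ext; apply Finsupp.ext; intro w
  rw [St_apply, coeff_mul₂, MonoidAlgebra.coeff_sum, Finset.sum_apply']
  rw [Finset.sum_comm]
  refine Finset.sum_congr rfl ?_
  intro j _
  rw [MonoidAlgebra.coeff_smul, Finsupp.smul_apply, St_apply, smul_eq_mul]
  rw [Finset.sum_eq_single ((FreeMonoid.toList w).length)]
  · rw [List.take_length, List.drop_length]
    rw [show FreeMonoid.ofList (FreeMonoid.toList w) = w from FreeMonoid.ofList_toList w]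
    rw [show (FreeMonoid.ofList ([] : List σ)) = 1 from rfl]
    rw [i2_apply_one, mul_comm]
  · intro i him hi
    rw [Finset.mem_range] at him
    have hne : FreeMonoid.ofList ((FreeMonoid.toList w).drop i) ≠ 1 := by
      intro hcon
      have h5 := congrArg FreeMonoid.toList hcon
      rw [FreeMonoid.toList_ofList, FreeMonoid.toList_one] at h5
      have h6 := congrArg List.length h5
      rw [List.length_drop, List.length_nil] at h6
      omega
    rw [i2_apply_ne _ _ _ hne, mul_zero]
  · intro hcon
    exact absurd (Finset.mem_range.mpr (by omega)) hcon

lemma St_sum {ι : Type*} (t : FreeMonoid σ) (s : Finset ι)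
    (F : ι → MonoidAlgebra P (FreeMonoid σ × FreeMonoid σ)) :
    St t (∑ l ∈ s, F l) = ∑ l ∈ s, St t (F l) := by
  apply MonoidAlgebra.ext; apply Finsupp.ext; intro w
  rw [St_apply, MonoidAlgebra.coeff_sum, Finset.sum_apply', MonoidAlgebra.coeff_sum, Finset.sum_apply']
  exact Finset.sum_congr rfl fun l _ => (St_apply _ _ _).symm

lemma smul_ne_zero' {c : P} {x : MonoidAlgebra P (FreeMonoid σ)} (hP : ∀ a b : P, a * b = 0 → a = 0 ∨ b = 0)
    (hc : c ≠ 0) (hx : x ≠ 0) : c • x ≠ 0 := by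
  obtain ⟨w, hw⟩ := Finsupp.support_nonempty_iff.mpr (mt MonoidAlgebra.coeff_eq_zero.mp hx)
  intro hcon
  have : (c • x).coeff w = 0 := by rw [hcon]; rfl
  rw [MonoidAlgebra.coeff_smul, Finsupp.smul_apply, smul_eq_mul] at this
  exact (Finsupp.mem_support_iff.mp hw) ((hP _ _ this).resolve_left hc)

lemma descent {P : Type*} [CommRing P] [IsDomain P] [CharZero P] {σ : Type*}
    (f g : MonoidAlgebra P (FreeMonoid σ)) (df dg : ℕ)
    (hf0 : f ≠ 0) (hg0 : g ≠ 0)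
    (hfhom : ∀ w ∈ f.coeff.support, (FreeMonoid.toList w).length = df)
    (hghom : ∀ w ∈ g.coeff.support, (FreeMonoid.toList w).length = dg)
    (hgprim : Delta P σ g = i1 P σ g + i2 P σ g)
    (hfprim : Delta P σ f = i1 P σ f + i2 P σ f)
    (hdf : 1 ≤ df) (hfg : df < dg) :
    ∀ m : ℕ, ∀ (c : P) (h : MonoidAlgebra P (FreeMonoid σ)) (kk : ℕ), c ≠ 0 → 1 ≤ kk →
      (∀ w ∈ h.coeff.support, (FreeMonoid.toList w).length = m) → c • g = h * f ^ kk → False := by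
  classical
  intro m
  induction m using Nat.strong_induction_on with
  | _ m IH =>
  intro c h kk hc hkk hhom heq
  have hB : NoZeroDivisors (MonoidAlgebra P (FreeMonoid σ)) := inferInstance
  -- h is nonzero
  have hh0 : h ≠ 0 := by
    rintro rfl
    rw [zero_mul] at heq
    exact smul_ne_zero' (fun a b hab => mul_eq_zero.mp hab) hc hg0 heq
  -- pick a word in the support of f
  obtain ⟨t, ht⟩ := Finsupp.support_nonempty_iff.mpr (mt MonoidAlgebra.coeff_eq_zero.mp hf0)
  have hft : f.coeff t ≠ 0 := Finsupp.mem_support_iff.mp ht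
  have htlen : (FreeMonoid.toList t).length = df := hfhom t ht
  have ht1 : t ≠ 1 := by
    intro hcon
    rw [hcon, FreeMonoid.toList_one] at htlen
    simp at htlen
    omega
  -- the slice of the LHS along t vanishes
  have hL : St t (Delta P σ (c • g)) = 0 := by
    apply MonoidAlgebra.ext; apply Finsupp.ext; intro w
    rw [St_apply, map_smul, MonoidAlgebra.coeff_smul, Finsupp.smul_apply, hgprim, MonoidAlgebra.coeff_add, Finsupp.add_apply,
      i1_apply_ne _ _ _ ht1]
    have hgt : g.coeff t = 0 := by
      by_contra hgt
      have := hghom t (Finsupp.mem_support_iff.mpr hgt)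
      omega
    have h2 : (i2 P σ g).coeff (w, t) = 0 := by
      by_cases hw : w = 1
      · subst hw; rw [i2_apply_one, hgt]
      · exact i2_apply_ne _ _ _ hw
    rw [h2, add_zero, smul_zero]
    rfl
  -- binomial expansion
  have hpow : (Delta P σ f) ^ kk
      = ∑ l ∈ Finset.range (kk+1),
          (kk.choose l) • (i1 P σ (f^l) * i2 P σ (f^(kk-l))) := by
    rw [hfprim, Commute.add_pow (commute_i1_i2 f f)]
    refine Finset.sum_congr rfl ?_
    intro l _
    rw [map_pow, map_pow,
      ← (Nat.cast_commute (kk.choose l) ((i1 P σ f)^l * (i2 P σ f)^(kk-l))).eq,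
      ← nsmul_eq_mul]
  -- the master identity
  have hmaster : (0 : MonoidAlgebra P (FreeMonoid σ))
      = ∑ l ∈ Finset.range (kk+1), (kk.choose l) •
          ∑ j ∈ Finset.range ((FreeMonoid.toList t).length + 1),
            (f^(kk-l)).coeff (FreeMonoid.ofList ((FreeMonoid.toList t).drop j)) •
              (St (FreeMonoid.ofList ((FreeMonoid.toList t).take j)) (Delta P σ h) * f^l) := by
    calc (0 : MonoidAlgebra P (FreeMonoid σ))
        = St t (Delta P σ (c • g)) := hL.symm
      _ = St t (Delta P σ h * (Delta P σ f) ^ kk) := by rw [heq, map_mul, map_pow]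
      _ = St t (∑ l ∈ Finset.range (kk+1),
            (kk.choose l) • ((Delta P σ h * i1 P σ (f^l)) * i2 P σ (f^(kk-l)))) := by
          rw [hpow, Finset.mul_sum]
          congr 1
          refine Finset.sum_congr rfl ?_
          intro l _
          rw [mul_smul_comm, mul_assoc]
      _ = ∑ l ∈ Finset.range (kk+1), (kk.choose l) •
            St t ((Delta P σ h * i1 P σ (f^l)) * i2 P σ (f^(kk-l))) := by
          rw [St_sum]
          exact Finset.sum_congr rfl fun l _ => St_nsmul _ _ _
      _ = ∑ l ∈ Finset.range (kk+1), (kk.choose l) •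
            ∑ j ∈ Finset.range ((FreeMonoid.toList t).length + 1),
              (f^(kk-l)).coeff (FreeMonoid.ofList ((FreeMonoid.toList t).drop j)) •
                (St (FreeMonoid.ofList ((FreeMonoid.toList t).take j)) (Delta P σ h) * f^l) := by
          refine Finset.sum_congr rfl ?_
          intro l _
          rw [St_mul_i2]
          congr 1
          refine Finset.sum_congr rfl ?_
          intro j _
          rw [St_mul_i1]
  -- name the slice
  set Lt := St t (Delta P σ h) with hLt
  -- the inner term function
  set F : ℕ → MonoidAlgebra P (FreeMonoid σ) := fun l => (kk.choose l) •
          ∑ j ∈ Finset.range ((FreeMonoid.toList t).length + 1),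
            (f^(kk-l)).coeff (FreeMonoid.ofList ((FreeMonoid.toList t).drop j)) •
              (St (FreeMonoid.ofList ((FreeMonoid.toList t).take j)) (Delta P σ h) * f^l)
    with hF
  -- terms with l ≤ kk - 2 vanish
  have hvanish : ∀ l ∈ Finset.range (kk+1), l ∉ ({kk - 1, kk} : Finset ℕ) → F l = 0 := by
    intro l hl hln
    rw [Finset.mem_range] at hl
    rw [Finset.mem_insert, Finset.mem_singleton] at hln
    push_neg at hln
    have hkl : 2 ≤ kk - l := by omega
    simp only [hF]
    have : ∀ j ∈ Finset.range ((FreeMonoid.toList t).length + 1),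
        (f^(kk-l)).coeff (FreeMonoid.ofList ((FreeMonoid.toList t).drop j)) •
          (St (FreeMonoid.ofList ((FreeMonoid.toList t).take j)) (Delta P σ h) * f^l) = 0 := by
      intro j hj
      rw [Finset.mem_range] at hj
      have hz : (f^(kk-l)).coeff (FreeMonoid.ofList ((FreeMonoid.toList t).drop j)) = 0 := by
        by_contra hnz
        have := hom_pow hfhom (kk-l) _ (Finsupp.mem_support_iff.mpr hnz)
        rw [FreeMonoid.toList_ofList, List.length_drop] at this
        have h2d : 2 * df ≤ (kk - l) * df := Nat.mul_le_mul_right df hkl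
        omega
      rw [hz, zero_smul]
    rw [Finset.sum_eq_zero this, smul_zero]
  -- reduce the sum to two terms
  have htwo : (0 : MonoidAlgebra P (FreeMonoid σ)) = F (kk - 1) + F kk := by
    have hsub : ({kk - 1, kk} : Finset ℕ) ⊆ Finset.range (kk+1) := by
      intro l hl
      rw [Finset.mem_insert, Finset.mem_singleton] at hl
      rw [Finset.mem_range]
      omega
    rw [hmaster, ← Finset.sum_subset hsub (fun l hl hln => hvanish l hl hln)]
    exact Finset.sum_pair (by omega)
  -- compute F kk
  have hFkk : F kk = Lt * f ^ kk := by
    simp only [hF]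
    have hinner : ∀ j ∈ Finset.range ((FreeMonoid.toList t).length + 1), j ≠ df →
        (f^(kk-kk)).coeff (FreeMonoid.ofList ((FreeMonoid.toList t).drop j)) •
          (St (FreeMonoid.ofList ((FreeMonoid.toList t).take j)) (Delta P σ h) * f^kk) = 0 := by
      intro j hj hjd
      rw [Finset.mem_range] at hj
      have hz : (f^(kk-kk)).coeff (FreeMonoid.ofList ((FreeMonoid.toList t).drop j)) = 0 := by
        rw [Nat.sub_self, pow_zero, MonoidAlgebra.one_def, MonoidAlgebra.coeff_single, Finsupp.single_apply]
        rw [if_neg]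
        intro hcon
        have h5 := congrArg FreeMonoid.toList hcon
        rw [FreeMonoid.toList_ofList, FreeMonoid.toList_one] at h5
        have h6 := congrArg List.length h5
        rw [List.length_drop, List.length_nil] at h6
        omega
      rw [hz, zero_smul]
    rw [Finset.sum_eq_single df]
    · rw [Nat.sub_self, pow_zero, ← htlen, List.drop_length, List.take_length]
      rw [show FreeMonoid.ofList (FreeMonoid.toList t) = t from FreeMonoid.ofList_toList t]
      rw [show (FreeMonoid.ofList ([] : List σ)) = 1 from rfl]
      rw [show (1 : MonoidAlgebra P (FreeMonoid σ)).coeff 1 = 1 from by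
        rw [MonoidAlgebra.one_def]; exact Finsupp.single_eq_same]
      rw [one_smul, Nat.choose_self, one_smul]
    · intro j hj hjd
      exact hinner j hj hjd
    · intro hcon
      exact absurd (Finset.mem_range.mpr (by omega)) hcon
  -- compute F (kk - 1)
  have hFk1 : F (kk - 1) = kk • ((f.coeff t) • (h * f ^ (kk - 1))) := by
    simp only [hF]
    have hd1 : kk - (kk - 1) = 1 := by omega
    rw [hd1, pow_one]
    rw [Finset.sum_eq_single 0]
    · rw [List.drop_zero, List.take_zero]
      rw [show FreeMonoid.ofList (FreeMonoid.toList t) = t from FreeMonoid.ofList_toList t]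
      rw [show (FreeMonoid.ofList ([] : List σ)) = 1 from rfl]
      rw [St_one_Delta]
      rw [show kk.choose (kk - 1) = kk from by
        rw [← Nat.choose_symm (by omega : kk - 1 ≤ kk), hd1, Nat.choose_one_right]]
    · intro j hj hj0
      rw [Finset.mem_range] at hj
      have hz : f.coeff (FreeMonoid.ofList ((FreeMonoid.toList t).drop j)) = 0 := by
        by_contra hnz
        have := hfhom _ (Finsupp.mem_support_iff.mpr hnz)
        rw [FreeMonoid.toList_ofList, List.length_drop] at this
        omega
      rw [hz, zero_smul]
    · intro hcon
      exact absurd (Finset.mem_range.mpr (by omega)) hcon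
  -- key relation
  have hkey : ((kk : P) * f.coeff t) • h + Lt * f = 0 := by
    have hcomb : (0 : MonoidAlgebra P (FreeMonoid σ))
        = (((kk : P) * f.coeff t) • h + Lt * f) * f ^ (kk - 1) := by
      rw [htwo, hFkk, hFk1]
      rw [← Nat.cast_smul_eq_nsmul P kk, smul_smul]
      have hpows : f ^ kk = f * f ^ (kk - 1) := by
        conv_lhs => rw [show kk = (kk - 1) + 1 from by omega]
        rw [pow_succ']
      rw [hpows, add_mul, smul_mul_assoc, ← mul_assoc Lt f]
    have := hcomb.symm
    rcases mul_eq_zero.mp this with h1 | h1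
    · exact h1
    · exact absurd h1 (pow_ne_zero _ hf0)
  -- support of Lt
  have hLtsupp : ∀ p ∈ Lt.coeff.support, (FreeMonoid.toList p).length + df = m := by
    intro p hp
    have hne : (Delta P σ h).coeff (p, t) ≠ 0 := by
      rw [← St_apply]; exact Finsupp.mem_support_iff.mp hp
    have := hom_Delta hhom (p, t) (Finsupp.mem_support_iff.mpr hne)
    simpa [htlen] using this
  by_cases hm : m < df
  · -- Lt = 0, so h = 0, contradiction
    have hLt0 : Lt = 0 := by
      apply MonoidAlgebra.ext; apply Finsupp.ext; intro p
      by_contra hp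
      have := hLtsupp p (Finsupp.mem_support_iff.mpr (by simpa using hp))
      omega
    rw [hLt0, zero_mul, add_zero] at hkey
    have hsc : ((kk : P) * f.coeff t) ≠ 0 :=
      mul_ne_zero (Nat.cast_ne_zero.mpr (by omega)) hft
    exact smul_ne_zero' (fun a b hab => mul_eq_zero.mp hab) hsc hh0 hkey
  · -- recurse
    have hmd : df ≤ m := not_lt.mp hm
    have heq' : (((kk : P) * f.coeff t) * c) • g = (-Lt) * f ^ (kk + 1) := by
      have h1 : ((kk : P) * f.coeff t) • h = -(Lt * f) := by
        have := hkey
        linear_combination (norm := abel) this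
      calc (((kk : P) * f.coeff t) * c) • g = ((kk : P) * f.coeff t) • (c • g) := by rw [smul_smul]
        _ = ((kk : P) * f.coeff t) • (h * f ^ kk) := by rw [heq]
        _ = (((kk : P) * f.coeff t) • h) * f ^ kk := by rw [smul_mul_assoc]
        _ = (-(Lt * f)) * f ^ kk := by rw [h1]
        _ = (-Lt) * f ^ (kk + 1) := by
            rw [neg_mul, neg_mul, mul_assoc, ← pow_succ']
    have hc' : (((kk : P) * f.coeff t) * c) ≠ 0 :=
      mul_ne_zero (mul_ne_zero (Nat.cast_ne_zero.mpr (by omega)) hft) hc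
    have hhom' : ∀ w ∈ (-Lt).coeff.support, (FreeMonoid.toList w).length = m - df := by
      intro w hw
      rw [MonoidAlgebra.coeff_neg, Finsupp.support_neg] at hw
      have := hLtsupp w hw
      omega
    exact IH (m - df) (by omega) (((kk : P) * f.coeff t) * c) (-Lt) (kk + 1) hc' (by omega)
      hhom' heq'

lemma main_aux {P : Type*} [CommRing P] [IsDomain P] [CharZero P] {σ : Type*}
    (f g u v : MonoidAlgebra P (FreeMonoid σ)) (df dg : ℕ)
    (hf0 : f ≠ 0) (hg0 : g ≠ 0)
    (hfhom : ∀ w ∈ f.coeff.support, (FreeMonoid.toList w).length = df)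
    (hghom : ∀ w ∈ g.coeff.support, (FreeMonoid.toList w).length = dg)
    (hfprim : Delta P σ f = i1 P σ f + i2 P σ f)
    (hgprim : Delta P σ g = i1 P σ g + i2 P σ g)
    (hnz : ¬ (u = 0 ∧ v = 0)) (heq : u * f + v * g = 0) (hle : df ≤ dg) : df = dg := by
  classical
  by_contra hne
  have hlt : df < dg := lt_of_le_of_ne hle hne
  -- f has positive degree
  have hdf1 : 1 ≤ df := by
    by_contra hd
    push_neg at hd
    have hdf0 : df = 0 := by omega
    have hf1 : f = MonoidAlgebra.single 1 (f.coeff 1) := by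
      apply MonoidAlgebra.ext; apply Finsupp.ext; intro w
      by_cases hw : w = 1
      · subst hw; rw [MonoidAlgebra.coeff_single, Finsupp.single_eq_same]
      · rw [MonoidAlgebra.coeff_single, Finsupp.single_apply, if_neg (fun hcon => hw hcon.symm)]
        by_contra hnz2
        have hlen := hfhom w (Finsupp.mem_support_iff.mpr hnz2)
        rw [hdf0, List.length_eq_zero_iff] at hlen
        exact hw (by apply FreeMonoid.toList.injective; rw [FreeMonoid.toList_one, hlen])
    set c0 := f.coeff 1 with hc0def
    have hprim := hfprim
    rw [hf1] at hprim
    have hsm : (MonoidAlgebra.single (1 : FreeMonoid σ) c0)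
        = c0 • (1 : MonoidAlgebra P (FreeMonoid σ)) := by
      rw [MonoidAlgebra.one_def, MonoidAlgebra.smul_single, smul_eq_mul, mul_one]
    rw [hsm, map_smul, i1_smul, i2_smul, map_one (Delta P σ), map_one (i1 P σ),
      map_one (i2 P σ)] at hprim
    have h1 : c0 • (1 : MonoidAlgebra P (FreeMonoid σ × FreeMonoid σ)) = 0 :=
      left_eq_add.mp hprim
    rw [MonoidAlgebra.one_def, MonoidAlgebra.smul_single, smul_eq_mul, mul_one] at h1
    have hc0 : c0 = 0 := MonoidAlgebra.single_eq_zero.mp h1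
    rw [hf1, hc0] at hf0
    exact hf0 (MonoidAlgebra.single_zero 1)
  -- v ≠ 0
  have hv : v ≠ 0 := by
    rintro rfl
    rw [zero_mul, add_zero] at heq
    rcases mul_eq_zero.mp heq with h1 | h1
    · exact hnz ⟨h1, rfl⟩
    · exact hf0 h1
  -- pick a word of f
  obtain ⟨t₀, ht₀⟩ := Finsupp.support_nonempty_iff.mpr (mt MonoidAlgebra.coeff_eq_zero.mp hf0)
  have hft₀ : f.coeff t₀ ≠ 0 := Finsupp.mem_support_iff.mp ht₀
  have ht₀len : (FreeMonoid.toList t₀).length = df := hfhom t₀ ht₀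
  -- the transduction
  set h : MonoidAlgebra P (FreeMonoid σ) :=
    MonoidAlgebra.comapDomain (fun w => w * t₀)
      (fun a b hab => mul_right_cancel hab) g with hh
  have happly : ∀ w, h.coeff w = g.coeff (w * t₀) := fun w => Finsupp.comapDomain_apply _ _ _ _
  -- coefficient of u * f at w * t₀
  have keyf : ∀ w : FreeMonoid σ, (u * f).coeff (w * t₀) = u.coeff w * f.coeff t₀ := by
    intro w
    rw [coeff_mul]
    have hlenwt : (FreeMonoid.toList (w * t₀)).length
        = (FreeMonoid.toList w).length + df := by
      rw [FreeMonoid.toList_mul, List.length_append, ht₀len]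
    rw [Finset.sum_eq_single ((FreeMonoid.toList w).length)]
    · rw [FreeMonoid.toList_mul, List.take_left, List.drop_left,
        FreeMonoid.ofList_toList, FreeMonoid.ofList_toList]
    · intro i hi hiw
      rw [Finset.mem_range] at hi
      have hz : f.coeff (FreeMonoid.ofList ((FreeMonoid.toList (w * t₀)).drop i)) = 0 := by
        by_contra hnz2
        have := hfhom _ (Finsupp.mem_support_iff.mpr hnz2)
        rw [FreeMonoid.toList_ofList, List.length_drop] at this
        omega
      rw [hz, mul_zero]
    · intro hcon
      exact absurd (Finset.mem_range.mpr (by omega)) hcon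
  -- coefficient of v * g at w * t₀
  have keyg : ∀ w : FreeMonoid σ, (v * g).coeff (w * t₀) = (v * h).coeff w := by
    intro w
    rw [coeff_mul, coeff_mul]
    have hlenwt : (FreeMonoid.toList (w * t₀)).length
        = (FreeMonoid.toList w).length + df := by
      rw [FreeMonoid.toList_mul, List.length_append, ht₀len]
    have hsub : Finset.range ((FreeMonoid.toList w).length + 1)
        ⊆ Finset.range ((FreeMonoid.toList (w * t₀)).length + 1) := by
      intro i hi
      rw [Finset.mem_range] at hi ⊢
      omega
    rw [← Finset.sum_subset hsub]
    · refine Finset.sum_congr rfl ?_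
      intro i hi
      rw [Finset.mem_range] at hi
      have hile : i ≤ (FreeMonoid.toList w).length := by omega
      rw [FreeMonoid.toList_mul, List.take_append_of_le_length hile,
        List.drop_append_of_le_length hile, FreeMonoid.ofList_append,
        FreeMonoid.ofList_toList]
      rw [happly]
    · intro i hi hni
      rw [Finset.mem_range] at hi
      have higt : (FreeMonoid.toList w).length < i := by
        by_contra hcon
        exact hni (Finset.mem_range.mpr (by omega))
      have hz : g.coeff (FreeMonoid.ofList ((FreeMonoid.toList (w * t₀)).drop i)) = 0 := by
        by_contra hnz2
        have := hghom _ (Finsupp.mem_support_iff.mpr hnz2)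
        rw [FreeMonoid.toList_ofList, List.length_drop] at this
        omega
      rw [hz, mul_zero]
  -- the relation c₀ • u + v * h = 0
  have keyrel : (f.coeff t₀) • u + v * h = 0 := by
    apply MonoidAlgebra.ext; apply Finsupp.ext; intro w
    have h0 : (u * f + v * g).coeff (w * t₀) = 0 := by rw [heq]; rfl
    rw [MonoidAlgebra.coeff_add, Finsupp.add_apply, keyf, keyg] at h0
    rw [MonoidAlgebra.coeff_add, Finsupp.add_apply, MonoidAlgebra.coeff_smul, Finsupp.smul_apply, MonoidAlgebra.coeff_zero, Finsupp.coe_zero, Pi.zero_apply,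
      smul_eq_mul, mul_comm]
    exact h0
  -- the factorization
  have hfactor : (f.coeff t₀) • g = h * f := by
    have h1 : v * h = -((f.coeff t₀) • u) := eq_neg_of_add_eq_zero_right keyrel
    have h2 : u * f = -(v * g) := eq_neg_of_add_eq_zero_left heq
    have h3 : v * (h * f) = v * ((f.coeff t₀) • g) := by
      calc v * (h * f) = (v * h) * f := by rw [mul_assoc]
        _ = -((f.coeff t₀) • u) * f := by rw [h1]
        _ = -((f.coeff t₀) • (u * f)) := by rw [neg_mul, smul_mul_assoc]
        _ = -((f.coeff t₀) • (-(v * g))) := by rw [h2]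
        _ = (f.coeff t₀) • (v * g) := by rw [smul_neg, neg_neg]
        _ = v * ((f.coeff t₀) • g) := by rw [mul_smul_comm]
    have h4 : v * (h * f - (f.coeff t₀) • g) = 0 := by rw [mul_sub, h3, sub_self]
    rcases mul_eq_zero.mp h4 with h5 | h5
    · exact absurd h5 hv
    · exact (sub_eq_zero.mp h5).symm
  -- h is homogeneous of degree dg - df
  have hhom : ∀ w ∈ h.coeff.support, (FreeMonoid.toList w).length = dg - df := by
    intro w hw
    have : g.coeff (w * t₀) ≠ 0 := by rw [← happly]; exact Finsupp.mem_support_iff.mp hw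
    have := hghom _ (Finsupp.mem_support_iff.mpr this)
    rw [FreeMonoid.toList_mul, List.length_append, ht₀len] at this
    omega
  exact descent f g df dg hf0 hg0 hfhom hghom hgprim hfprim hdf1 hlt (dg - df)
    (f.coeff t₀) h 1 hft₀ le_rfl hhom (by rw [pow_one]; exact hfactor)

end Stmt16Aux

open Stmt16Aux in
/-- Lemma 12: if `f` and `g` are nonzero homogeneous elements of `P ⊗ L` (Lie
elements with coefficients in `P`) inside the free associative algebra
`B = P⟨y₁,…,yₙ⟩` over an integral domain `P`, and `f, g` are left dependent over
`B`, then `deg f = deg g`. -/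
theorem stmt16 (k : Type*) [Field k] [CharZero k]
    (P : Type*) [CommRing P] [IsDomain P] [Algebra k P] (n : ℕ)
    (f g : MonoidAlgebra P (FreeMonoid (Fin n)))
    (hf0 : f ≠ 0) (hg0 : g ≠ 0)
    (df dg : ℕ)
    (hfhom : ∀ w ∈ f.coeff.support, (FreeMonoid.toList w).length = df)
    (hghom : ∀ w ∈ g.coeff.support, (FreeMonoid.toList w).length = dg)
    (hfL : f ∈ LieSubalgebra.lieSpan P (MonoidAlgebra P (FreeMonoid (Fin n)))
      (Set.range fun i : Fin n => MonoidAlgebra.of P (FreeMonoid (Fin n)) (FreeMonoid.of i)))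
    (hgL : g ∈ LieSubalgebra.lieSpan P (MonoidAlgebra P (FreeMonoid (Fin n)))
      (Set.range fun i : Fin n => MonoidAlgebra.of P (FreeMonoid (Fin n)) (FreeMonoid.of i)))
    (hdep : ∃ u v : MonoidAlgebra P (FreeMonoid (Fin n)),
      ¬ (u = 0 ∧ v = 0) ∧ u * f + v * g = 0) :
    df = dg := by
  haveI : CharZero P := charZero_of_injective_algebraMap (algebraMap k P).injective
  obtain ⟨u, v, hnz, heq⟩ := hdep
  rcases le_total df dg with hle | hle
  · exact main_aux f g u v df dg hf0 hg0 hfhom hghom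
      (mem_prim f hfL) (mem_prim g hgL) hnz heq hle
  · exact (main_aux g f v u dg df hg0 hf0 hghom hfhom
      (mem_prim g hgL) (mem_prim f hfL)
      (fun hc => hnz ⟨hc.2, hc.1⟩) (by rw [add_comm]; exact heq) hle).symm
end

section
/- Let P = k{x_1,…,x_n} be the free Poisson algebra over a field k of characteristic 0 and P^e its universal enveloping algebra, with the h-degree filtration where elements of P have h-degree 0 and each h_{x_i} has h-degree 1. If u, v are nonzero elements of P^e with leading monomials (words in h_{x_1},…,h_{x_n}) w_u, w_v and leading coefficients p_u, p_v ∈ P, then uv is nonzero with leading monomial w_u w_v (concatenation) and leading coefficient p_u p_v. -/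
section Aux
variable {k : Type*} [Field k] {n : ℕ}
variable {P : Type*} [CommRing P] [Algebra k P]
variable {Pe : Type*} [Ring Pe] [Algebra k Pe]
variable (ι : P →ₐ[k] Pe) (h : Fin n → Pe)

def Hw (w : FreeMonoid (Fin n)) : Pe := ((FreeMonoid.toList w).map h).prod

lemma Hw_mul (w w' : FreeMonoid (Fin n)) : Hw h (w * w') = Hw h w * Hw h w' := by
  simp [Hw, FreeMonoid.toList_mul]

lemma Hw_of_mul (i : Fin n) (w : FreeMonoid (Fin n)) :
    Hw h (FreeMonoid.of i * w) = h i * Hw h w := by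
  simp [Hw, FreeMonoid.toList_mul, FreeMonoid.toList_of]

def SPe (L : ℕ) : Submodule k Pe :=
  Submodule.span k {x | ∃ (p : P) (w : FreeMonoid (Fin n)),
    (FreeMonoid.toList w).length < L ∧ x = ι p * Hw h w}

lemma SPe_mono {L L' : ℕ} (hLL : L ≤ L') : (SPe (k := k) ι h L) ≤ SPe ι h L' :=
  Submodule.span_mono (fun _ ⟨p, w, hw, hx⟩ => ⟨p, w, lt_of_lt_of_le hw hLL, hx⟩)

variable (NF : Pe ≃ₗ[k] MonoidAlgebra P (FreeMonoid (Fin n)))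

lemma symm_single
    (hNF : ∀ c : MonoidAlgebra P (FreeMonoid (Fin n)),
      NF.symm c = Finsupp.sum c.coeff fun w p => ι p * ((FreeMonoid.toList w).map h).prod)
    (w : FreeMonoid (Fin n)) (p : P) :
    NF.symm (MonoidAlgebra.single w p) = ι p * Hw h w := by
  rw [hNF, MonoidAlgebra.coeff_single, Finsupp.sum_single_index] <;> simp [Hw]

lemma NF_gen
    (hNF : ∀ c : MonoidAlgebra P (FreeMonoid (Fin n)),
      NF.symm c = Finsupp.sum c.coeff fun w p => ι p * ((FreeMonoid.toList w).map h).prod)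
    (w : FreeMonoid (Fin n)) (p : P) :
    NF (ι p * Hw h w) = MonoidAlgebra.single w p := by
  rw [← symm_single ι h NF hNF, LinearEquiv.apply_symm_apply]

lemma supp_of_mem_SPe
    (hNF : ∀ c : MonoidAlgebra P (FreeMonoid (Fin n)),
      NF.symm c = Finsupp.sum c.coeff fun w p => ι p * ((FreeMonoid.toList w).map h).prod)
    {L : ℕ} {x : Pe} (hx : x ∈ SPe (k := k) ι h L) :
    ∀ z ∈ (NF x).coeff.support, (FreeMonoid.toList z).length < L := by
  classical
  induction hx using Submodule.span_induction with
  | mem x hx =>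
    obtain ⟨p, w, hw, rfl⟩ := hx
    intro z hz
    rw [NF_gen ι h NF hNF, MonoidAlgebra.coeff_single] at hz
    have := Finsupp.support_single_subset hz
    simp only [Finset.mem_singleton] at this
    subst this; exact hw
  | zero => simp
  | add x y _ _ ihx ihy =>
    intro z hz
    rw [map_add, MonoidAlgebra.coeff_add] at hz
    rcases Finset.mem_union.mp (Finsupp.support_add hz) with h' | h'
    · exact ihx z h'
    · exact ihy z h'
  | smul a x _ ih =>
    intro z hz
    rw [map_smul, MonoidAlgebra.coeff_smul] at hz
    exact ih z (Finsupp.support_smul hz)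

lemma mem_SPe_of_supp
    (hNF : ∀ c : MonoidAlgebra P (FreeMonoid (Fin n)),
      NF.symm c = Finsupp.sum c.coeff fun w p => ι p * ((FreeMonoid.toList w).map h).prod)
    {L : ℕ} {x : Pe} (hx : ∀ z ∈ (NF x).coeff.support, (FreeMonoid.toList z).length < L) :
    x ∈ SPe (k := k) ι h L := by
  have : x = Finsupp.sum (NF x).coeff fun w p => ι p * ((FreeMonoid.toList w).map h).prod := by
    rw [← hNF, LinearEquiv.symm_apply_apply]
  rw [this, Finsupp.sum]
  exact Submodule.sum_mem _ fun z hz =>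
    Submodule.subset_span ⟨(NF x).coeff z, z, hx z hz, rfl⟩

lemma hmul_mem (hcomm : ∀ (i : Fin n) (p : P), ∃ q : P, h i * ι p = ι p * h i + ι q)
    {L : ℕ} {x : Pe} (hx : x ∈ SPe (k := k) ι h L) (i : Fin n) :
    h i * x ∈ SPe (k := k) ι h (L + 1) := by
  induction hx using Submodule.span_induction with
  | mem x hx =>
    obtain ⟨p, w, hw, rfl⟩ := hx
    obtain ⟨q, hq⟩ := hcomm i p
    have key : h i * (ι p * Hw h w) = ι p * Hw h (FreeMonoid.of i * w) + ι q * Hw h w := by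
      rw [Hw_of_mul, ← mul_assoc, hq, add_mul, mul_assoc]
    rw [key]
    refine add_mem (Submodule.subset_span ⟨p, FreeMonoid.of i * w, ?_, rfl⟩)
      (Submodule.subset_span ⟨q, w, Nat.lt_succ_of_lt hw, rfl⟩)
    simpa [FreeMonoid.toList_mul, FreeMonoid.toList_of] using Nat.succ_lt_succ hw
  | zero => rw [mul_zero]; exact zero_mem _
  | add x y _ _ ihx ihy => rw [mul_add]; exact add_mem ihx ihy
  | smul a x _ ih => rw [mul_smul_comm]; exact Submodule.smul_mem _ _ ih

lemma iota_mul_mem (p : P) {L : ℕ} {x : Pe} (hx : x ∈ SPe (k := k) ι h L) :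
    ι p * x ∈ SPe (k := k) ι h L := by
  induction hx using Submodule.span_induction with
  | mem x hx =>
    obtain ⟨p', w, hw, rfl⟩ := hx
    rw [← mul_assoc, ← map_mul]
    exact Submodule.subset_span ⟨p * p', w, hw, rfl⟩
  | zero => rw [mul_zero]; exact zero_mem _
  | add x y _ _ ihx ihy => rw [mul_add]; exact add_mem ihx ihy
  | smul a x _ ih => rw [mul_smul_comm]; exact Submodule.smul_mem _ _ ih

lemma mul_Hw_mem (w' : FreeMonoid (Fin n)) {L : ℕ} {x : Pe}
    (hx : x ∈ SPe (k := k) ι h L) :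
    x * Hw h w' ∈ SPe (k := k) ι h (L + (FreeMonoid.toList w').length) := by
  induction hx using Submodule.span_induction with
  | mem x hx =>
    obtain ⟨p, w, hw, rfl⟩ := hx
    rw [mul_assoc, ← Hw_mul]
    refine Submodule.subset_span ⟨p, w * w', ?_, rfl⟩
    simp only [FreeMonoid.toList_mul, List.length_append]
    omega
  | zero => rw [zero_mul]; exact zero_mem _
  | add x y _ _ ihx ihy => rw [add_mul]; exact add_mem ihx ihy
  | smul a x _ ih => rw [smul_mul_assoc]; exact Submodule.smul_mem _ _ ih

lemma comm_mem (hcomm : ∀ (i : Fin n) (p : P), ∃ q : P, h i * ι p = ι p * h i + ι q) :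
    ∀ (l : List (Fin n)) (p : P),
      (l.map h).prod * ι p - ι p * (l.map h).prod ∈ SPe (k := k) ι h l.length := by
  intro l
  induction l with
  | nil => intro p; simp
  | cons i t ih =>
    intro p
    obtain ⟨q, hq⟩ := hcomm i p
    have e1 : h i * (ι p * (t.map h).prod)
        = ι p * (h i * (t.map h).prod) + ι q * (t.map h).prod := by
      rw [← mul_assoc, hq, add_mul, mul_assoc]
    have key : ((i :: t).map h).prod * ι p - ι p * ((i :: t).map h).prod
        = h i * ((t.map h).prod * ι p - ι p * (t.map h).prod) + ι q * (t.map h).prod := by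
      rw [List.map_cons, List.prod_cons, mul_assoc, mul_sub, e1]
      abel
    rw [key]
    have h1 : h i * ((t.map h).prod * ι p - ι p * (t.map h).prod)
        ∈ SPe (k := k) ι h (t.length + 1) := hmul_mem ι h hcomm (ih p) i
    have h2 : ι q * (t.map h).prod ∈ SPe (k := k) ι h (t.length + 1) :=
      Submodule.subset_span ⟨q, FreeMonoid.ofList t,
        by simp, by simp [Hw]⟩
    exact add_mem h1 h2

lemma comm_mem' (hcomm : ∀ (i : Fin n) (p : P), ∃ q : P, h i * ι p = ι p * h i + ι q)
    (w : FreeMonoid (Fin n)) (p : P) :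
    Hw h w * ι p - ι p * Hw h w ∈ SPe (k := k) ι h (FreeMonoid.toList w).length :=
  comm_mem ι h hcomm (FreeMonoid.toList w) p

lemma prod_err (hcomm : ∀ (i : Fin n) (p : P), ∃ q : P, h i * ι p = ι p * h i + ι q)
    (w w' : FreeMonoid (Fin n)) (p p' : P) :
    (ι p * Hw h w) * (ι p' * Hw h w') - ι (p * p') * Hw h (w * w')
      ∈ SPe (k := k) ι h ((FreeMonoid.toList w).length + (FreeMonoid.toList w').length) := by
  have key : (ι p * Hw h w) * (ι p' * Hw h w') - ι (p * p') * Hw h (w * w')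
      = ι p * ((Hw h w * ι p' - ι p' * Hw h w) * Hw h w') := by
    rw [Hw_mul, map_mul, sub_mul, mul_sub]
    noncomm_ring
  rw [key]
  exact iota_mul_mem ι h p (mul_Hw_mem ι h w' (comm_mem' ι h hcomm w p'))

end Aux

lemma lex_append_right' {α : Type*} {r : α → α → Prop} {l₁ l₂ : List α} (s t : List α)
    (hl : List.Lex r l₁ l₂) :
    l₁.length = l₂.length → List.Lex r (l₁ ++ s) (l₂ ++ t) := by
  induction hl with
  | nil => intro hlen; simp at hlen
  | @cons a l₁ l₂ h ih =>
    intro hlen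
    exact List.Lex.cons (ih (by simpa using hlen))
  | rel h => intro _; exact List.Lex.rel h

lemma lex_append_left' {α : Type*} {r : α → α → Prop} {s t : List α} :
    ∀ (l : List α), List.Lex r s t → List.Lex r (l ++ s) (l ++ t)
  | [], h => h
  | _ :: l, h => List.Lex.cons (lex_append_left' l h)

def wlt {m : ℕ} (u v : FreeMonoid (Fin m)) : Prop :=
  (FreeMonoid.toList u).length < (FreeMonoid.toList v).length ∨
    ((FreeMonoid.toList u).length = (FreeMonoid.toList v).length ∧
      List.Lex (· < ·) (FreeMonoid.toList u) (FreeMonoid.toList v))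

/-- Lemma 7: in the universal enveloping algebra `Pe` of the free Poisson algebra —
presented via its normal form `NF : Pe ≃ MonoidAlgebra P (words in h_{x_1},…,h_{x_n})`
with `NF⁻¹(Σ p_w · w) = Σ ι(p_w) · h_w` and the commutation relation
`h_i · ι p = ι p · h_i + ι q` — leading monomials and leading coefficients are
multiplicative: if `u, v ≠ 0` have leading monomials `wu, wv` and leading
coefficients `pu, pv`, then `uv ≠ 0` has leading monomial `wu·wv` (concatenation)
and leading coefficient `pu·pv`. -/
theorem stmt17 (k : Type*) [Field k] [CharZero k] (n : ℕ)
    (P : Type*) [CommRing P] [IsDomain P] [Algebra k P]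
    (Pe : Type*) [Ring Pe] [Algebra k Pe]
    (ι : P →ₐ[k] Pe) (hι : Function.Injective ι)
    (h : Fin n → Pe)
    (NF : Pe ≃ₗ[k] MonoidAlgebra P (FreeMonoid (Fin n)))
    (hNF : ∀ c : MonoidAlgebra P (FreeMonoid (Fin n)),
      NF.symm c = Finsupp.sum c.coeff fun w p => ι p * ((FreeMonoid.toList w).map h).prod)
    (hcomm : ∀ (i : Fin n) (p : P), ∃ q : P, h i * ι p = ι p * h i + ι q)
    (u v : Pe) (hu : u ≠ 0) (hv : v ≠ 0)
    (wu wv : FreeMonoid (Fin n)) (pu pv : P)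
    (hpu : (NF u).coeff wu = pu) (hpu0 : pu ≠ 0)
    (hwu : ∀ w ∈ (NF u).coeff.support, w ≠ wu → wlt w wu)
    (hpv : (NF v).coeff wv = pv) (hpv0 : pv ≠ 0)
    (hwv : ∀ w ∈ (NF v).coeff.support, w ≠ wv → wlt w wv) :
    u * v ≠ 0 ∧ (NF (u * v)).coeff (wu * wv) = pu * pv ∧
      ∀ w ∈ (NF (u * v)).coeff.support, w ≠ wu * wv → wlt w (wu * wv) := by
  classical
  set c := NF u with hc
  set d := NF v with hd
  have hlenu : ∀ w ∈ c.coeff.support,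
      (FreeMonoid.toList w).length ≤ (FreeMonoid.toList wu).length := by
    intro w hw
    by_cases hwe : w = wu
    · exact le_of_eq (by rw [hwe])
    · rcases hwu w hw hwe with h' | ⟨h', _⟩
      · exact le_of_lt h'
      · exact le_of_eq h'
  have hlenv : ∀ w ∈ d.coeff.support,
      (FreeMonoid.toList w).length ≤ (FreeMonoid.toList wv).length := by
    intro w hw
    by_cases hwe : w = wv
    · exact le_of_eq (by rw [hwe])
    · rcases hwv w hw hwe with h' | ⟨h', _⟩
      · exact le_of_lt h'
      · exact le_of_eq h'
  set L := (FreeMonoid.toList wu).length + (FreeMonoid.toList wv).length with hL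
  have hu' : u = ∑ w ∈ c.coeff.support, ι (c.coeff w) * Hw h w := by
    conv_lhs => rw [← NF.symm_apply_apply u]
    rw [hNF]; rfl
  have hv' : v = ∑ w ∈ d.coeff.support, ι (d.coeff w) * Hw h w := by
    conv_lhs => rw [← NF.symm_apply_apply v]
    rw [hNF]; rfl
  have expand : u * v = ∑ w ∈ c.coeff.support, ∑ w' ∈ d.coeff.support,
      (ι (c.coeff w) * Hw h w) * (ι (d.coeff w') * Hw h w') := by
    rw [hu', hv', Finset.sum_mul_sum]
  have expand2 : NF.symm (c * d) = ∑ w ∈ c.coeff.support, ∑ w' ∈ d.coeff.support,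
      ι (c.coeff w * d.coeff w') * Hw h (w * w') := by
    simp only [MonoidAlgebra.mul_def, Finsupp.sum, map_sum, symm_single ι h NF hNF]
  have hsub : u * v - NF.symm (c * d) ∈ SPe (k := k) ι h L := by
    rw [expand, expand2, ← Finset.sum_sub_distrib]
    refine Submodule.sum_mem _ fun w hw => ?_
    rw [← Finset.sum_sub_distrib]
    refine Submodule.sum_mem _ fun w' hw' => ?_
    exact SPe_mono ι h (add_le_add (hlenu w hw) (hlenv w' hw'))
      (prod_err ι h hcomm w w' (c.coeff w) (d.coeff w'))
  have hNFuv : NF (u * v) = c * d + NF (u * v - NF.symm (c * d)) := by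
    rw [map_sub, LinearEquiv.apply_symm_apply]
    abel
  set E := NF (u * v - NF.symm (c * d)) with hE
  have hEshort : ∀ z ∈ E.coeff.support, (FreeMonoid.toList z).length < L :=
    supp_of_mem_SPe ι h NF hNF hsub
  have hLwuwv : (FreeMonoid.toList (wu * wv)).length = L := by
    simp [FreeMonoid.toList_mul, hL]
  have hwusupp : wu ∈ c.coeff.support := Finsupp.mem_support_iff.mpr (by rw [hpu]; exact hpu0)
  have hwvsupp : wv ∈ d.coeff.support := Finsupp.mem_support_iff.mpr (by rw [hpv]; exact hpv0)
  have hEzero : E.coeff (wu * wv) = 0 := by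
    by_contra hne
    have := hEshort _ (Finsupp.mem_support_iff.mpr hne)
    omega
  have hcd : (c * d).coeff (wu * wv) = pu * pv := by
    rw [MonoidAlgebra.coeff_mul]
    simp only [Finsupp.sum]
    rw [Finset.sum_eq_single_of_mem wu hwusupp ?h1]
    case h1 =>
      intro a ha hane
      refine Finset.sum_eq_zero fun b hb => ?_
      rw [if_neg]
      intro hab
      have hlen : (FreeMonoid.toList a).length + (FreeMonoid.toList b).length = L := by
        have := congrArg (fun z => (FreeMonoid.toList z).length) hab
        simpa [FreeMonoid.toList_mul, hL] using this
      rcases hwu a ha hane with h' | ⟨h', _⟩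
      · have := hlenv b hb; omega
      · have htl : FreeMonoid.toList a ++ FreeMonoid.toList b
            = FreeMonoid.toList wu ++ FreeMonoid.toList wv := by
          rw [← FreeMonoid.toList_mul, ← FreeMonoid.toList_mul, hab]
        exact hane (FreeMonoid.toList.injective (List.append_inj htl h').1)
    rw [Finset.sum_eq_single_of_mem wv hwvsupp ?h2]
    · rw [if_pos rfl, hpu, hpv]
    case h2 =>
      intro b hb hbne
      rw [if_neg]
      intro hab
      exact hbne (mul_left_cancel hab)
  have hval : (NF (u * v)).coeff (wu * wv) = pu * pv := by
    rw [hNFuv, MonoidAlgebra.coeff_add, Finsupp.add_apply, hcd, hEzero, add_zero]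
  have hne0 : u * v ≠ 0 := by
    intro h0
    rw [h0, map_zero] at hval
    exact mul_ne_zero hpu0 hpv0 (by simpa using hval.symm)
  refine ⟨hne0, hval, ?_⟩
  intro z hz hzne
  rw [hNFuv, MonoidAlgebra.coeff_add] at hz
  rcases Finset.mem_union.mp (Finsupp.support_add hz) with hz' | hz'
  · obtain ⟨a, ha, b, hb, hab⟩ := Finset.mem_mul.mp (MonoidAlgebra.support_coeff_mul_subset c d hz')
    subst hab
    have la := hlenu a ha
    have lb := hlenv b hb
    have hzlen : (FreeMonoid.toList (a * b)).length
        = (FreeMonoid.toList a).length + (FreeMonoid.toList b).length := by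
      simp [FreeMonoid.toList_mul]
    unfold wlt
    by_cases hstrict :
        (FreeMonoid.toList a).length + (FreeMonoid.toList b).length < L
    · left; omega
    · have hla : (FreeMonoid.toList a).length = (FreeMonoid.toList wu).length := by omega
      have hlb : (FreeMonoid.toList b).length = (FreeMonoid.toList wv).length := by omega
      refine Or.inr ⟨by omega, ?_⟩
      rw [FreeMonoid.toList_mul, FreeMonoid.toList_mul]
      by_cases hae : a = wu
      · subst hae
        have hbne : b ≠ wv := fun hbe => hzne (by rw [hbe])
        rcases hwv b hb hbne with h' | ⟨_, hlex⟩
        · omega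
        · exact lex_append_left' _ hlex
      · rcases hwu a ha hae with h' | ⟨_, hlex⟩
        · omega
        · exact lex_append_right' _ _ hlex hla
  · have := hEshort z hz'
    unfold wlt
    left; omega
end

section
/- Let P = k{x_1,…,x_n} be the free Poisson algebra over a field k of characteristic 0 and P^e its universal enveloping algebra. Let s_1,…,s_k ∈ P^e be nonzero elements written in normal form with leading monomials ldm(s_i) (words in h_{x_1},…,h_{x_n}). If for all i ≠ j neither ldm(s_i) is a left divisor of ldm(s_j) nor vice versa (u is a left divisor of v if v = tu for some word t), then s_1,…,s_k are left independent over P^e: the only solution of Σ u_r s_r = 0 with u_r ∈ P^e is u_1 = … = u_k = 0. -/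
namespace Stmt18Aux

variable {m : ℕ}

abbrev len (u : FreeMonoid (Fin m)) : ℕ := (FreeMonoid.toList u).length

lemma toList_inj {u v : FreeMonoid (Fin m)} (h : FreeMonoid.toList u = FreeMonoid.toList v) :
    u = v := by
  have := congrArg FreeMonoid.ofList h
  simpa [FreeMonoid.ofList_toList] using this

lemma wlt_trans {a b c : FreeMonoid (Fin m)} (h1 : wlt a b) (h2 : wlt b c) : wlt a c := by
  rcases h1 with h1 | ⟨e1, l1⟩
  · rcases h2 with h2 | ⟨e2, l2⟩
    · exact Or.inl (h1.trans h2)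
    · exact Or.inl (e2 ▸ h1)
  · rcases h2 with h2 | ⟨e2, l2⟩
    · exact Or.inl (e1 ▸ h2)
    · exact Or.inr ⟨e1.trans e2, List.lex_trans (fun a b => lt_trans a b) l1 l2⟩

lemma wlt_irrefl (a : FreeMonoid (Fin m)) : ¬ wlt a a := by
  rintro (h | ⟨-, h⟩)
  · exact lt_irrefl _ h
  · exact irrefl _ h

lemma wlt_asymm {a b : FreeMonoid (Fin m)} (h1 : wlt a b) (h2 : wlt b a) : False :=
  wlt_irrefl a (wlt_trans h1 h2)

lemma wlt_total {a b : FreeMonoid (Fin m)} (h : a ≠ b) : wlt a b ∨ wlt b a := by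
  rcases Nat.lt_trichotomy (len a) (len b) with hl | hl | hl
  · exact Or.inl (Or.inl hl)
  · rcases trichotomous_of (List.Lex (· < ·)) (FreeMonoid.toList a) (FreeMonoid.toList b) with
      hx | hx | hx
    · exact Or.inl (Or.inr ⟨hl, hx⟩)
    · exact absurd (toList_inj hx) h
    · exact Or.inr (Or.inr ⟨hl.symm, hx⟩)
  · exact Or.inr (Or.inl hl)

lemma wlt_len_le {a b : FreeMonoid (Fin m)} (h : wlt a b) : len a ≤ len b := by
  rcases h with h | ⟨h, -⟩
  · exact h.le
  · exact h.le

lemma lex_append_left {r : Fin m → Fin m → Prop} (t : List (Fin m)) {a b : List (Fin m)}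
    (h : List.Lex r a b) : List.Lex r (t ++ a) (t ++ b) := by
  induction t with
  | nil => exact h
  | cons x t ih => exact List.Lex.cons ih

lemma lex_append_right {r : Fin m → Fin m → Prop} (t : List (Fin m)) {a b : List (Fin m)}
    (h : List.Lex r a b) (hl : a.length = b.length) : List.Lex r (a ++ t) (b ++ t) := by
  induction h with
  | nil => simp at hl
  | @cons a l1 l2 h ih => exact List.Lex.cons (ih (by simpa using hl))
  | rel h => exact List.Lex.rel h

lemma wlt_mul_left {a b : FreeMonoid (Fin m)} (t : FreeMonoid (Fin m)) (h : wlt a b) :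
    wlt (t * a) (t * b) := by
  rcases h with h | ⟨e, l⟩
  · exact Or.inl (by simp only [FreeMonoid.toList_mul, List.length_append]; omega)
  · exact Or.inr ⟨by simp [FreeMonoid.toList_mul, e], by
      simpa [FreeMonoid.toList_mul] using lex_append_left (FreeMonoid.toList t) l⟩

lemma wlt_mul_right {a b : FreeMonoid (Fin m)} (t : FreeMonoid (Fin m)) (h : wlt a b) :
    wlt (a * t) (b * t) := by
  rcases h with h | ⟨e, l⟩
  · exact Or.inl (by simp only [FreeMonoid.toList_mul, List.length_append]; omega)
  · exact Or.inr ⟨by simp [FreeMonoid.toList_mul, e], by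
      simpa [FreeMonoid.toList_mul] using lex_append_right (FreeMonoid.toList t) l e⟩

def wle (a b : FreeMonoid (Fin m)) : Prop := wlt a b ∨ a = b

lemma wle_refl (a : FreeMonoid (Fin m)) : wle a a := Or.inr rfl

lemma wle_mul {a b c d : FreeMonoid (Fin m)} (h1 : wle a b) (h2 : wle c d) :
    wle (a * c) (b * d) := by
  rcases h1 with h1 | rfl
  · rcases h2 with h2 | rfl
    · exact Or.inl (wlt_trans (wlt_mul_right c h1) (wlt_mul_left b h2))
    · exact Or.inl (wlt_mul_right c h1)
  · rcases h2 with h2 | rfl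
    · exact Or.inl (wlt_mul_left a h2)
    · exact Or.inr rfl

lemma wle_len_le {a b : FreeMonoid (Fin m)} (h : wle a b) : len a ≤ len b := by
  rcases h with h | rfl
  · exact wlt_len_le h
  · exact le_refl _

lemma exists_wlt_max (s : Finset (FreeMonoid (Fin m))) (hs : s.Nonempty) :
    ∃ a ∈ s, ∀ b ∈ s, b ≠ a → wlt b a := by
  classical
  induction s using Finset.induction_on with
  | empty => exact absurd hs (by simp)
  | @insert x s hx ih =>
    rcases s.eq_empty_or_nonempty with rfl | hs'
    · exact ⟨x, by simp, by simp +contextual⟩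
    · obtain ⟨a, ha, hmax⟩ := ih hs'
      by_cases hxa : x = a
      · subst hxa; exact absurd ha hx
      rcases wlt_total hxa with hlt | hlt
      · refine ⟨a, Finset.mem_insert_of_mem ha, ?_⟩
        intro b hb hba
        rcases Finset.mem_insert.mp hb with rfl | hb
        · exact hlt
        · exact hmax b hb hba
      · refine ⟨x, Finset.mem_insert_self _ _, ?_⟩
        intro b hb hbx
        rcases Finset.mem_insert.mp hb with rfl | hb
        · exact absurd rfl hbx
        · by_cases hba : b = a
          · subst hba; exact hlt
          · exact wlt_trans (hmax b hb hba) hlt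

end Stmt18Aux

namespace Stmt18Aux

section Alg
variable {k : Type*} [Field k] {n : ℕ}
  {P : Type*} [CommRing P] [Algebra k P] {Pe : Type*} [Ring Pe] [Algebra k Pe]
  (ι : P →ₐ[k] Pe) (h : Fin n → Pe)
  (NF : Pe ≃ₗ[k] MonoidAlgebra P (FreeMonoid (Fin n)))
  (hNF : ∀ c : MonoidAlgebra P (FreeMonoid (Fin n)),
      NF.symm c = Finsupp.sum c.coeff fun w p => ι p * ((FreeMonoid.toList w).map h).prod)

omit [Field k] [Algebra k P] [Algebra k Pe] in
lemma hp_cons (i : Fin n) (a : FreeMonoid (Fin n)) :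
    ((FreeMonoid.toList (FreeMonoid.of i * a)).map h).prod
      = h i * ((FreeMonoid.toList a).map h).prod := by
  simp [FreeMonoid.toList_mul]

include hNF

lemma L0 (a : FreeMonoid (Fin n)) (p : P) :
    NF.symm (MonoidAlgebra.single a p) = ι p * ((FreeMonoid.toList a).map h).prod := by
  rw [hNF, MonoidAlgebra.coeff_single]
  exact Finsupp.sum_single_index (by simp)

lemma L1 (p : P) (c : MonoidAlgebra P (FreeMonoid (Fin n))) :
    NF.symm (MonoidAlgebra.single 1 p * c) = ι p * NF.symm c := by
  induction c using MonoidAlgebra.induction with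
  | zero => simp
  | single_add a b f ha hb ih =>
    have e1 : ∀ g : MonoidAlgebra P (FreeMonoid (Fin n)),
        MonoidAlgebra.single (1 : FreeMonoid (Fin n)) p * (MonoidAlgebra.single a b + g) =
        MonoidAlgebra.single a (p * b) + MonoidAlgebra.single 1 p * g := by
      intro g
      rw [mul_add]
      congr 1
      exact (MonoidAlgebra.single_mul_single ..).trans (by rw [one_mul])
    rw [e1 f, map_add, map_add, L0 ι h NF hNF, L0 ι h NF hNF, ih, mul_add, map_mul, mul_assoc]

lemma L2 (hcomm : ∀ (i : Fin n) (p : P), ∃ q : P, h i * ι p = ι p * h i + ι q)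
    (i : Fin n) (c : MonoidAlgebra P (FreeMonoid (Fin n))) :
    ∃ d : MonoidAlgebra P (FreeMonoid (Fin n)),
      h i * NF.symm c
        = NF.symm (MonoidAlgebra.mapDomain (fun v => FreeMonoid.of i * v) c + d) ∧
      d.coeff.support ⊆ c.coeff.support := by
  classical
  induction c using MonoidAlgebra.induction with
  | zero => exact ⟨0, by simp, by simp⟩
  | single_add a b f hafs hb ih =>
    obtain ⟨d, hd, hds⟩ := ih
    obtain ⟨q, hq⟩ := hcomm i b
    refine ⟨MonoidAlgebra.single a q + d, ?_, ?_⟩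
    · have key : h i * NF.symm (MonoidAlgebra.single a b) =
          NF.symm (MonoidAlgebra.single (FreeMonoid.of i * a) b + MonoidAlgebra.single a q) := by
        rw [map_add, L0 ι h NF hNF, L0 ι h NF hNF, L0 ι h NF hNF, hp_cons h i,
          ← mul_assoc (h i), hq, add_mul, mul_assoc]
      have hmd : ∀ g : MonoidAlgebra P (FreeMonoid (Fin n)),
          MonoidAlgebra.mapDomain (fun v => FreeMonoid.of i * v)
            (MonoidAlgebra.single a b + g)
          = MonoidAlgebra.single (FreeMonoid.of i * a) b
            + MonoidAlgebra.mapDomain (fun v => FreeMonoid.of i * v) g := fun g => by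
        rw [MonoidAlgebra.mapDomain_add, MonoidAlgebra.mapDomain_single]
      rw [map_add, mul_add, key, hd, hmd f, ← map_add]
      congr 1
      abel
    · intro u hu
      rw [MonoidAlgebra.coeff_add] at hu
      have h1 := Finsupp.support_add hu
      rw [MonoidAlgebra.coeff_add, Finsupp.mem_support_iff, Finsupp.add_apply]
      rcases Finset.mem_union.mp h1 with h2 | h2
      · have hua : u = a := Finset.mem_singleton.mp (Finsupp.support_single_subset h2)
        subst hua
        have hfa : f.coeff u = 0 := Finsupp.notMem_support_iff.mp hafs
        simpa [MonoidAlgebra.coeff_single, hfa] using hb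
      · have h3 := hds h2
        have hne : a ≠ u := fun e => hafs (e ▸ h3)
        simpa [MonoidAlgebra.coeff_single, Finsupp.single_apply, hne] using Finsupp.mem_support_iff.mp h3

omit hNF in
lemma ofList_cons (i : Fin n) (l : List (Fin n)) :
    FreeMonoid.ofList (i :: l) = FreeMonoid.of i * FreeMonoid.ofList l := by
  have : FreeMonoid.toList (FreeMonoid.ofList (i :: l))
      = FreeMonoid.toList (FreeMonoid.of i * FreeMonoid.ofList l) := by
    simp [FreeMonoid.toList_mul]
  have := congrArg FreeMonoid.ofList this
  simpa [FreeMonoid.ofList_toList] using this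

lemma L3 (hcomm : ∀ (i : Fin n) (p : P), ∃ q : P, h i * ι p = ι p * h i + ι q)
    (l : List (Fin n)) (c : MonoidAlgebra P (FreeMonoid (Fin n))) (N : ℕ)
    (hc : ∀ v ∈ c.coeff.support, (FreeMonoid.toList v).length ≤ N) :
    ∃ d : MonoidAlgebra P (FreeMonoid (Fin n)),
      (l.map h).prod * NF.symm c
        = NF.symm (MonoidAlgebra.mapDomain (fun v => FreeMonoid.ofList l * v) c + d) ∧
      ∀ u ∈ d.coeff.support, (FreeMonoid.toList u).length < l.length + N := by
  classical
  induction l with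
  | nil =>
    refine ⟨0, ?_, by simp⟩
    have e : (fun v : FreeMonoid (Fin n) => FreeMonoid.ofList ([] : List (Fin n)) * v) = id := by
      funext v
      show FreeMonoid.ofList [] * v = v
      exact one_mul v
    have e2 : MonoidAlgebra.mapDomain
        (fun v : FreeMonoid (Fin n) => FreeMonoid.ofList ([] : List (Fin n)) * v) c = c := by
      simp only [MonoidAlgebra.mapDomain, e]
      exact congrArg MonoidAlgebra.ofCoeff (Finsupp.mapDomain_id (v := c.coeff))
    rw [e2, add_zero, List.map_nil, List.prod_nil, one_mul]
  | cons i l ih =>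
    obtain ⟨d', hd', hb'⟩ := ih
    obtain ⟨d2, hd2, hs2⟩ := L2 ι h NF hNF hcomm i
      (MonoidAlgebra.mapDomain (fun v => FreeMonoid.ofList l * v) c + d')
    refine ⟨MonoidAlgebra.mapDomain (fun v => FreeMonoid.of i * v) d' + d2, ?_, ?_⟩
    · have step1 : ((i :: l).map h).prod * NF.symm c
          = h i * NF.symm
            (MonoidAlgebra.mapDomain (fun v => FreeMonoid.ofList l * v) c + d') := by
        rw [List.map_cons, List.prod_cons, mul_assoc, hd']
      rw [step1, hd2]
      congr 1
      have e3 : MonoidAlgebra.mapDomain (fun v : FreeMonoid (Fin n) => FreeMonoid.of i * v)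
            (MonoidAlgebra.mapDomain (fun v => FreeMonoid.ofList l * v) c)
          = MonoidAlgebra.mapDomain (fun v => FreeMonoid.ofList (i :: l) * v) c := by
        have efun : ((fun v => FreeMonoid.of i * v) ∘ (fun v => FreeMonoid.ofList l * v))
            = (fun v : FreeMonoid (Fin n) => FreeMonoid.ofList (i :: l) * v) := by
          funext v
          show FreeMonoid.of i * (FreeMonoid.ofList l * v) = FreeMonoid.ofList (i :: l) * v
          rw [ofList_cons, mul_assoc]
        show MonoidAlgebra.ofCoeff (Finsupp.mapDomain (fun v => FreeMonoid.of i * v)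
            (Finsupp.mapDomain (fun v => FreeMonoid.ofList l * v) c.coeff))
          = MonoidAlgebra.ofCoeff (Finsupp.mapDomain (fun v => FreeMonoid.ofList (i :: l) * v) c.coeff)
        rw [← efun]
        exact congrArg MonoidAlgebra.ofCoeff Finsupp.mapDomain_comp.symm
      have e4 : ∀ A B : MonoidAlgebra P (FreeMonoid (Fin n)),
          MonoidAlgebra.mapDomain (fun v : FreeMonoid (Fin n) => FreeMonoid.of i * v) (A + B)
          = MonoidAlgebra.mapDomain (fun v => FreeMonoid.of i * v) A
            + MonoidAlgebra.mapDomain (fun v => FreeMonoid.of i * v) B := fun A B => by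
        exact MonoidAlgebra.mapDomain_add _ A B
      rw [e4, e3, add_assoc]
    · intro u hu
      rw [MonoidAlgebra.coeff_add] at hu
      rcases Finset.mem_union.mp (Finsupp.support_add hu) with h1 | h1
      · obtain ⟨v, hv, huv⟩ := Finset.mem_image.mp (Finsupp.mapDomain_support h1)
        have := hb' v hv
        subst huv
        simp only [FreeMonoid.toList_mul, FreeMonoid.toList_of, List.length_append,
          List.length_cons, List.length_nil]
        omega
      · have h2 := hs2 h1
        rw [MonoidAlgebra.coeff_add] at h2
        rcases Finset.mem_union.mp (Finsupp.support_add h2) with h3 | h3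
        · obtain ⟨v, hv, huv⟩ := Finset.mem_image.mp (Finsupp.mapDomain_support h3)
          have := hc v hv
          subst huv
          simp only [FreeMonoid.toList_mul, FreeMonoid.toList_ofList, List.length_append,
            List.length_cons]
          omega
        · have := hb' u h3
          simp only [List.length_cons]
          omega

lemma L4 (p : P) (x : Pe) : NF (ι p * x) = MonoidAlgebra.single 1 p * NF x := by
  have h1 : ι p * x = NF.symm (MonoidAlgebra.single 1 p * NF x) := by
    rw [L1 ι h NF hNF, LinearEquiv.symm_apply_apply]
  rw [h1, LinearEquiv.apply_symm_apply]

lemma L5 (hcomm : ∀ (i : Fin n) (p : P), ∃ q : P, h i * ι p = ι p * h i + ι q)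
    (x y : Pe) (α β : FreeMonoid (Fin n))
    (hx : ∀ v ∈ (NF x).coeff.support, wle v α) (hy : ∀ v ∈ (NF y).coeff.support, wle v β) :
    (NF (x * y)).coeff (α * β) = (NF x).coeff α * (NF y).coeff β ∧
      ∀ v ∈ (NF (x * y)).coeff.support, wle v (α * β) := by
  classical
  have lenmul : ∀ a b : FreeMonoid (Fin n), len (a * b) = len a + len b := by
    intro a b; simp [len, FreeMonoid.toList_mul]
  have hD : ∀ a : FreeMonoid (Fin n), ∃ d : MonoidAlgebra P (FreeMonoid (Fin n)),
      ((FreeMonoid.toList a).map h).prod * y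
        = NF.symm (MonoidAlgebra.mapDomain (fun v => a * v) (NF y) + d)
      ∧ ∀ u ∈ d.coeff.support, len u < len a + len β := by
    intro a
    obtain ⟨d, hd, hb⟩ := L3 ι h NF hNF hcomm (FreeMonoid.toList a) (NF y) (len β)
      (fun v hv => wle_len_le (hy v hv))
    simp only [FreeMonoid.ofList_toList, LinearEquiv.symm_apply_apply] at hd
    exact ⟨d, hd, hb⟩
  choose D hD1 hD2 using hD
  have hxy : NF (x * y) = Finsupp.sum (NF x).coeff (fun a p =>
      MonoidAlgebra.single 1 p *
        (MonoidAlgebra.mapDomain (fun v => a * v) (NF y) + D a)) := by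
    have hx1 : x * y = Finsupp.sum (NF x).coeff
        (fun a p => ι p * (((FreeMonoid.toList a).map h).prod * y)) := by
      conv_lhs => rw [← LinearEquiv.symm_apply_apply NF x, hNF]
      rw [Finsupp.sum_mul]
      exact Finsupp.sum_congr fun a _ => by rw [mul_assoc]
    rw [hx1, map_finsuppSum]
    refine Finsupp.sum_congr fun a _ => ?_
    rw [hD1 a, L4 ι h NF hNF, LinearEquiv.apply_symm_apply]
  have hinj : ∀ a : FreeMonoid (Fin n), Function.Injective (fun v => a * v) :=
    fun a v1 v2 e => mul_left_cancel e
  have hDab : ∀ a : FreeMonoid (Fin n), len a ≤ len α → (D a).coeff (α * β) = 0 := by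
    intro a ha
    by_contra hne
    have := hD2 a (α * β) (Finsupp.mem_support_iff.mpr hne)
    rw [lenmul] at this
    omega
  have hfα : ((MonoidAlgebra.single 1 ((NF x).coeff α) *
      (MonoidAlgebra.mapDomain (fun v => α * v) (NF y) + D α) :
        MonoidAlgebra P (FreeMonoid (Fin n)))).coeff (α * β)
      = (NF x).coeff α * (NF y).coeff β := by
    rw [MonoidAlgebra.coeff_single_one_mul, MonoidAlgebra.coeff_add, Finsupp.add_apply, hDab α le_rfl, add_zero]
    congr 1
    exact Finsupp.mapDomain_apply (hinj α) (NF y).coeff β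
  constructor
  · rw [hxy, MonoidAlgebra.coeff_finsuppSum, Finsupp.sum_apply, Finsupp.sum, Finset.sum_eq_single α]
    · exact hfα
    · intro a ha hne
      rw [MonoidAlgebra.coeff_single_one_mul, MonoidAlgebra.coeff_add, Finsupp.add_apply]
      have hwlt : wlt a α := (hx a ha).resolve_right hne
      have hm : (MonoidAlgebra.mapDomain (fun v => a * v) (NF y)).coeff (α * β) = 0 := by
        rw [← Finsupp.notMem_support_iff]
        intro hmem
        obtain ⟨v, hv, he⟩ := Finset.mem_image.mp (Finsupp.mapDomain_support hmem)
        have h1 : wlt (a * v) (α * v) := wlt_mul_right v hwlt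
        have h2 : wle (α * v) (α * β) := wle_mul (wle_refl α) (hy v hv)
        have h3 : wlt (a * v) (α * β) := by
          rcases h2 with h2 | h2
          · exact wlt_trans h1 h2
          · exact h2 ▸ h1
        rw [he] at h3
        exact wlt_irrefl _ h3
      rw [hm, hDab a (wlt_len_le hwlt), add_zero, mul_zero]
    · intro hns
      rw [hfα, Finsupp.notMem_support_iff.mp hns, zero_mul]
  · intro v hv
    rw [hxy, MonoidAlgebra.coeff_finsuppSum] at hv
    obtain ⟨a, ha, hv2⟩ := Finset.mem_biUnion.mp (Finsupp.support_sum hv)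
    have hEv : (MonoidAlgebra.mapDomain (fun v => a * v) (NF y) + D a).coeff v ≠ 0 := by
      intro h0
      have := Finsupp.mem_support_iff.mp hv2
      rw [MonoidAlgebra.coeff_single_one_mul, h0, mul_zero] at this
      exact this rfl
    rcases Finset.mem_union.mp (Finsupp.support_add (Finsupp.mem_support_iff.mpr hEv)) with
      h1 | h1
    · obtain ⟨u, hu, he⟩ := Finset.mem_image.mp (Finsupp.mapDomain_support h1)
      rw [← he]
      exact wle_mul (hx a ha) (hy u hu)
    · have h2 : len a ≤ len α := wle_len_le (hx a ha)
      have h3 := hD2 a v h1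
      refine Or.inl (Or.inl ?_)
      show len v < len (α * β)
      rw [lenmul]
      omega

end Alg
end Stmt18Aux
/-- Lemma 9: in the universal enveloping algebra `Pe` of the free Poisson algebra —
presented via its normal form `NF : Pe ≃ MonoidAlgebra P (words in h_{x_1},…,h_{x_n})`
with `NF⁻¹(Σ p_w · w) = Σ ι(p_w) · h_w` and the commutation relation
`h_i · ι p = ι p · h_i + ι q` — if the leading monomials of nonzero elements
`s_1, …, s_K` are pairwise incomparable under left divisibility of words, then
`s_1, …, s_K` are left independent over `Pe`. -/
theorem stmt18 (k : Type*) [Field k] [CharZero k] (n : ℕ)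
    (P : Type*) [CommRing P] [IsDomain P] [Algebra k P]
    (Pe : Type*) [Ring Pe] [Algebra k Pe]
    (ι : P →ₐ[k] Pe) (hι : Function.Injective ι)
    (h : Fin n → Pe)
    (NF : Pe ≃ₗ[k] MonoidAlgebra P (FreeMonoid (Fin n)))
    (hNF : ∀ c : MonoidAlgebra P (FreeMonoid (Fin n)),
      NF.symm c = Finsupp.sum c.coeff fun w p => ι p * ((FreeMonoid.toList w).map h).prod)
    (hcomm : ∀ (i : Fin n) (p : P), ∃ q : P, h i * ι p = ι p * h i + ι q)
    (K : ℕ) (s : Fin K → Pe) (hs : ∀ r, s r ≠ 0)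
    (w : Fin K → FreeMonoid (Fin n))
    (hldc : ∀ r, (NF (s r)).coeff (w r) ≠ 0)
    (hldm : ∀ r, ∀ w' ∈ (NF (s r)).coeff.support, w' ≠ w r → wlt w' (w r))
    (hdiv : ∀ i j : Fin K, i ≠ j → ∀ t : FreeMonoid (Fin n), w i ≠ t * w j) :
    ∀ u : Fin K → Pe, ∑ r, u r * s r = 0 → ∀ r, u r = 0 := by
  classical
  intro u hsum
  by_contra hcon
  push_neg at hcon
  obtain ⟨r0, hr0⟩ := hcon
  set S : Finset (Fin K) := Finset.univ.filter (fun r => u r ≠ 0) with hS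
  have hSne : S.Nonempty := ⟨r0, by simp [hS, hr0]⟩
  have hα : ∀ r ∈ S, ∃ a, a ∈ (NF (u r)).coeff.support ∧ ∀ v ∈ (NF (u r)).coeff.support, Stmt18Aux.wle v a := by
    intro r hr
    have hne : NF (u r) ≠ 0 := by
      intro e
      have : u r = 0 := by
        have := congrArg NF.symm e
        simpa using this
      exact (Finset.mem_filter.mp hr).2 this
    obtain ⟨a, ha, hmax⟩ := Stmt18Aux.exists_wlt_max (NF (u r)).coeff.support
      (Finsupp.support_nonempty_iff.mpr fun e => hne (MonoidAlgebra.coeff_injective (e.trans MonoidAlgebra.coeff_zero.symm)))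
    refine ⟨a, ha, fun v hv => ?_⟩
    by_cases hva : v = a
    · exact Or.inr hva
    · exact Or.inl (hmax v hv hva)
  choose! α hα1 hα2 using hα
  obtain ⟨M, hM, hMmax⟩ := Stmt18Aux.exists_wlt_max (S.image (fun r => α r * w r))
    (hSne.image _)
  obtain ⟨rs, hrs, hrsM⟩ := Finset.mem_image.mp hM
  have huniq : ∀ r ∈ S, r ≠ rs → α r * w r ≠ M := by
    intro r hr hne heq
    have heq2 : α r * w r = α rs * w rs := heq.trans hrsM.symm
    have hsuf1 : FreeMonoid.toList (w r) <:+ FreeMonoid.toList (α r * w r) := by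
      rw [FreeMonoid.toList_mul]; exact List.suffix_append _ _
    have hsuf2 : FreeMonoid.toList (w rs) <:+ FreeMonoid.toList (α r * w r) := by
      rw [heq2, FreeMonoid.toList_mul]; exact List.suffix_append _ _
    rcases le_total (FreeMonoid.toList (w r)).length (FreeMonoid.toList (w rs)).length with
      hle | hle
    · obtain ⟨t, ht⟩ := List.suffix_of_suffix_length_le hsuf1 hsuf2 hle
      refine hdiv rs r (fun e => hne e.symm) (FreeMonoid.ofList t) ?_
      apply Stmt18Aux.toList_inj
      rw [FreeMonoid.toList_mul, FreeMonoid.toList_ofList]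
      exact ht.symm
    · obtain ⟨t, ht⟩ := List.suffix_of_suffix_length_le hsuf2 hsuf1 hle
      refine hdiv r rs hne (FreeMonoid.ofList t) ?_
      apply Stmt18Aux.toList_inj
      rw [FreeMonoid.toList_mul, FreeMonoid.toList_ofList]
      exact ht.symm
  have hL5 : ∀ r ∈ S, (NF (u r * s r)).coeff (α r * w r) = (NF (u r)).coeff (α r) * (NF (s r)).coeff (w r)
      ∧ ∀ v ∈ (NF (u r * s r)).coeff.support, Stmt18Aux.wle v (α r * w r) := by
    intro r hr
    refine Stmt18Aux.L5 ι h NF hNF hcomm (u r) (s r) (α r) (w r) (hα2 r hr) ?_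
    intro v hv
    by_cases hvw : v = w r
    · exact Or.inr hvw
    · exact Or.inl (hldm r v hv hvw)
  have hzero : (NF (∑ r, u r * s r)).coeff M = 0 := by rw [hsum]; simp
  rw [map_sum, MonoidAlgebra.coeff_sum, Finset.sum_apply'] at hzero
  have hside : ∀ r ∈ Finset.univ, r ≠ rs → (NF (u r * s r)).coeff M = 0 := by
    intro r _ hne
    by_cases hrS : r ∈ S
    · by_contra hne0
      have hvs : M ∈ (NF (u r * s r)).coeff.support := Finsupp.mem_support_iff.mpr hne0
      have hwle := (hL5 r hrS).2 M hvs
      have hMne := huniq r hrS hne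
      have hwlt : wlt (α r * w r) M := hMmax _ (Finset.mem_image_of_mem _ hrS) hMne
      rcases hwle with h1 | h1
      · exact Stmt18Aux.wlt_asymm h1 hwlt
      · exact hMne h1.symm
    · have hur : u r = 0 := by
        by_contra hne2
        exact hrS (Finset.mem_filter.mpr ⟨Finset.mem_univ r, hne2⟩)
      rw [hur, zero_mul, map_zero]
      rfl
  rw [Finset.sum_eq_single_of_mem rs (Finset.mem_univ rs) hside] at hzero
  rw [← hrsM] at hzero
  rw [(hL5 rs hrs).1] at hzero
  have h1 : (NF (u rs)).coeff (α rs) ≠ 0 := Finsupp.mem_support_iff.mp (hα1 rs hrs)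
  exact mul_ne_zero h1 (hldc rs) hzero
end
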